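/- arXiv:1602.03394 — 4 statements merged into one kernel-verified Lean document; each statement's English description precedes it below -/
import Mathlib

section
/- Let G be a finite metric graph and let λ > 0. Assume that the subgraph G_λ is connected and contains no cycle whose length is an odd integer multiple of π/√λ. Then dim R(G, λ) = β₁(G_λ). -/
open Real Set Filter Topology

noncomputable section

/-- A finite metric graph: finite vertex and edge sets, each edge `e` has an initial
vertex `o e`, a terminal vertex `t e` and a positive length `L e`, and is identified
with the interval `[0, L e]`.  Every vertex is an endpoint of some edge. -/
structure MetricGraph where
  V : Type
  E : Type
  [fintV : Fintype V]
  [fintE : Fintype E]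
  [decV : DecidableEq V]
  [decE : DecidableEq E]
  o : E → V
  t : E → V
  L : E → ℝ
  L_pos : ∀ e, 0 < L e
  noIsolated : ∀ v, ∃ e, o e = v ∨ t e = v

attribute [instance] MetricGraph.fintV MetricGraph.fintE MetricGraph.decV MetricGraph.decE

namespace MetricGraph

variable (G : MetricGraph)

/-- The source vertex of edge `e` traversed in direction `d`. -/
def esrc (e : G.E) (d : Bool) : G.V := if d then G.o e else G.t e

/-- The destination vertex of edge `e` traversed in direction `d`. -/
def edst (e : G.E) (d : Bool) : G.V := if d then G.t e else G.o e

/-- A cycle in a metric graph: a closed walk which uses no edge twice and repeats no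
vertex except that its initial and terminal vertices coincide. -/
structure Cycle where
  n : ℕ
  npos : 0 < n
  edge : Fin n → G.E
  dir : Fin n → Bool
  edge_inj : Function.Injective edge
  vert_inj : Function.Injective fun i => G.esrc (edge i) (dir i)
  chain : ∀ i : Fin n,
    G.edst (edge i) (dir i) =
      G.esrc (edge ⟨((i : ℕ) + 1) % n, Nat.mod_lt _ npos⟩)
        (dir ⟨((i : ℕ) + 1) % n, Nat.mod_lt _ npos⟩)

/-- The length of a cycle: the sum of the lengths of its edges. -/
def Cycle.length {G : MetricGraph} (c : G.Cycle) : ℝ := ∑ i, G.L (c.edge i)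

/-- The cycle `c` lies in the subgraph given by the edge set `S`. -/
def Cycle.inSub {G : MetricGraph} (c : G.Cycle) (S : Set G.E) : Prop := ∀ i, c.edge i ∈ S

/-- The cycle `c` has odd length with respect to `x`: its length is an odd multiple of `x`. -/
def Cycle.oddLength {G : MetricGraph} (c : G.Cycle) (x : ℝ) : Prop :=
  ∃ m : ℕ, Odd m ∧ c.length = m * x

/-- The initial vertex of a cycle. -/
def Cycle.start {G : MetricGraph} (c : G.Cycle) : G.V :=
  G.esrc (c.edge ⟨0, c.npos⟩) (c.dir ⟨0, c.npos⟩)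

/-- The vertices incident to an edge of the edge set `S`, i.e. the vertex set of the
subgraph generated by `S`. -/
def incVerts (S : Set G.E) : Set G.V := {v | ∃ e ∈ S, G.o e = v ∨ G.t e = v}

/-- Two vertices are related iff they are connected through edges of `S`. -/
def connRel (S : Set G.E) : G.V → G.V → Prop :=
  Relation.EqvGen fun v w => ∃ e ∈ S, G.o e = v ∧ G.t e = w

/-- The connected component of the vertex `v` in the subgraph given by `S`. -/
def component (S : Set G.E) (v : G.V) : Set G.V := {w | G.connRel S v w}

/-- The number of connected components of the subgraph given by the edge set `S`. -/
def beta0 (S : Set G.E) : ℕ := (G.component S '' G.incVerts S).ncard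

/-- The first Betti number `|E| - |V| + β₀` of the subgraph given by the edge set `S`. -/
def beta1 (S : Set G.E) : ℤ :=
  (S.ncard : ℤ) - ((G.incVerts S).ncard : ℤ) + (G.beta0 S : ℤ)

/-- The number of connected components of the subgraph given by `S` which contain a
cycle of odd length with respect to `x`. -/
def beta0odd (S : Set G.E) (x : ℝ) : ℕ :=
  (G.component S '' {v | v ∈ G.incVerts S ∧
    ∃ c : G.Cycle, c.inSub S ∧ c.oddLength x ∧ G.connRel S v c.start}).ncard

/-- The edge set of the subgraph `G_λ`: all edges whose length is a positive integer
multiple of `π / √λ`. -/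
def lamEdges (lam : ℝ) : Set G.E :=
  {e | ∃ k : ℕ, 0 < k ∧ G.L e = k * (π / Real.sqrt lam)}

/-- An edgewise given function is continuous at all the vertices of `G`. -/
def ContVert (f : G.E → ℝ → ℂ) : Prop :=
  (∀ e₁ e₂, G.o e₁ = G.o e₂ → f e₁ 0 = f e₂ 0) ∧
  (∀ e₁ e₂, G.o e₁ = G.t e₂ → f e₁ 0 = f e₂ (G.L e₂)) ∧
  (∀ e₁ e₂, G.t e₁ = G.t e₂ → f e₁ (G.L e₁) = f e₂ (G.L e₂))

/-- The value of an (edgewise given, vertex-continuous) function at the vertex `v`. -/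
def vtxVal (f : G.E → ℝ → ℂ) (v : G.V) : ℂ :=
  if h : ∃ e, G.o e = v then f h.choose 0
  else f (G.noIsolated v).choose (G.L ((G.noIsolated v).choose))

/-- `∂_ν f (v)`: the sum of the derivatives at the vertex `v` of the restrictions of
`f` to the edges incident to `v`, all pointing towards `v`. -/
def normDer (f : G.E → ℝ → ℂ) (v : G.V) : ℂ :=
  (∑ e ∈ Finset.univ.filter fun e => G.t e = v, deriv (f e) (G.L e)) -
    ∑ e ∈ Finset.univ.filter fun e => G.o e = v, deriv (f e) 0

/-- `f` solves `-f'' = μ f` on every edge and is continuous at the vertices.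
(A solution of `-f'' = μ f` on `[0, L e]` is identified with its unique extension to a
global solution on `ℝ`.) -/
def IsSol (mu : ℂ) (f : G.E → ℝ → ℂ) : Prop :=
  (∀ e, ContDiff ℝ 2 (f e)) ∧
  (∀ e, ∀ x : ℝ, deriv (deriv (f e)) x = -mu * f e x) ∧ G.ContVert f

/-- Membership in `ker (-Δ_G - λ)` for the Kirchhoff Laplacian `-Δ_G`. -/
def InKer (lam : ℝ) (f : G.E → ℝ → ℂ) : Prop :=
  G.IsSol (lam : ℂ) f ∧ ∀ v, G.normDer f v = 0

/-- `ker (-Δ_G - λ)` as a set of (edgewise given) functions. -/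
def kerSet (lam : ℝ) : Set (G.E → ℝ → ℂ) := {f | G.InKer lam f}

/-- `λ` is an eigenvalue of the Kirchhoff Laplacian `-Δ_G`. -/
def IsEigenvalue (lam : ℝ) : Prop := G.kerSet lam ≠ {0}

/-- `dim ker (-Δ_G - λ)`. -/
def dimKer (lam : ℝ) : ℕ := Module.finrank ℂ (Submodule.span ℂ (G.kerSet lam))

/-- The resonance eigenspace `R (G, λ)`: all elements of `ker (-Δ_G - λ)` vanishing at
every vertex of `G`. -/
def resSet (lam : ℝ) : Set (G.E → ℝ → ℂ) :=
  {f | G.InKer lam f ∧ ∀ e, f e 0 = 0 ∧ f e (G.L e) = 0}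

/-- `λ` is a (real) resonance of `G` iff `R (G, λ) ≠ {0}`. -/
def IsResonance (lam : ℝ) : Prop := G.resSet lam ≠ {0}

/-- `dim R (G, λ)`. -/
def dimRes (lam : ℝ) : ℕ := Module.finrank ℂ (Submodule.span ℂ (G.resSet lam))

/-- `R_B (G, λ)`: all elements of `ker (-Δ_G - λ)` vanishing at every vertex in `B`. -/
def resSetB (B : Set G.V) (lam : ℝ) : Set (G.E → ℝ → ℂ) :=
  {f | G.InKer lam f ∧ ∀ e, (G.o e ∈ B → f e 0 = 0) ∧ (G.t e ∈ B → f e (G.L e) = 0)}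

/-- `dim R_B (G, λ)`. -/
def dimResB (B : Set G.V) (lam : ℝ) : ℕ :=
  Module.finrank ℂ (Submodule.span ℂ (G.resSetB B lam))

/-- The degree of a vertex (a loop counts twice). -/
def degree (v : G.V) : ℕ := {e | G.o e = v}.ncard + {e | G.t e = v}.ncard

/-- The degree of a vertex inside the subgraph given by the edge set `S`. -/
def degreeIn (S : Set G.E) (v : G.V) : ℕ :=
  {e | e ∈ S ∧ G.o e = v}.ncard + {e | e ∈ S ∧ G.t e = v}.ncard

/-- The edge set of the core of `G`: the largest subgraph without vertices of degree one. -/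
def coreEdges : Set G.E := ⋃₀ {S : Set G.E | ∀ v, G.degreeIn S v ≠ 1}

/-- A boundary vertex is a vertex of degree one. -/
def IsBoundaryVertex (v : G.V) : Prop := G.degree v = 1

/-- A proper core vertex: all edges attached to it belong to the core of `G`. -/
def IsProperCoreVertex (v : G.V) : Prop :=
  ∀ e, G.o e = v ∨ G.t e = v → e ∈ G.coreEdges

/-- The defining property of the function `f^{(l)}` for the Titchmarsh--Weyl matrix:
`f` solves `-f'' = μ f` edgewise, is continuous at the vertices, and satisfies
`∂_ν f (v₀) = 1` and `∂_ν f (v) = 0` for all vertices `v ≠ v₀`. -/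
def IsTWsol (mu : ℂ) (v0 : G.V) (f : G.E → ℝ → ℂ) : Prop :=
  G.IsSol mu f ∧ G.normDer f v0 = 1 ∧ ∀ v, v ≠ v0 → G.normDer f v = 0

open scoped Classical in
/-- The Titchmarsh--Weyl matrix `M_B (μ)` with entries `(M_B (μ))_{k,l} = f^{(l)} (v_k)`
(defined via choice; junk if no `f^{(l)}` exists, i.e. at the eigenvalues). -/
def TW (B : Finset G.V) (mu : ℂ) : Matrix B B ℂ :=
  Matrix.of fun k l : B => if h : ∃ f, G.IsTWsol mu l f then G.vtxVal h.choose k else 0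

/-- The cycle `c` has commensurate edges: all ratios of edge lengths are rational. -/
def Commensurate (c : G.Cycle) : Prop :=
  ∀ i j, ∃ q : ℚ, G.L (c.edge i) = q * G.L (c.edge j)

/-- `u_C`: the maximal number such that the length of each edge of the cycle `c` is a
positive integer multiple of it. -/
def uC (c : G.Cycle) : ℝ :=
  sSup {u : ℝ | 0 < u ∧ ∀ i, ∃ k : ℕ, 0 < k ∧ G.L (c.edge i) = k * u}

/-- `λ_G := inf { π²/u_C² : C a cycle in G with commensurate edges }`, with value `+∞`
if there is no cycle with commensurate edges. -/
def lamThreshold : EReal :=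
  sInf {x : EReal | ∃ c : G.Cycle, G.Commensurate c ∧ x = ((π ^ 2 / (G.uC c) ^ 2 : ℝ) : EReal)}

end MetricGraph

section MatrixFun

variable {m : Type} [Fintype m]

/-- The matrix function `M` has a pole of order `n` at `λ`:
`lim_{z → λ} (z - λ)^n M(z)` exists and is nonzero, while
`lim_{z → λ} (z - λ)^(n+1) M(z) = 0`. -/
def hasPoleOrder (M : ℂ → Matrix m m ℂ) (lam : ℂ) (n : ℕ) : Prop :=
  (∃ A : Matrix m m ℂ, A ≠ 0 ∧
    Filter.Tendsto (fun z => (z - lam) ^ n • M z) (𝓝[≠] lam) (𝓝 A)) ∧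
  Filter.Tendsto (fun z => (z - lam) ^ (n + 1) • M z) (𝓝[≠] lam) (𝓝 0)

/-- `λ` is a pole of the matrix function `M`: `M` is analytic on a punctured
neighborhood of `λ` and has a pole of some order `n ≥ 1` at `λ`. -/
def isPole (M : ℂ → Matrix m m ℂ) (lam : ℂ) : Prop :=
  (∀ᶠ z in 𝓝[≠] lam, ∀ k l, AnalyticAt ℂ (fun w => M w k l) z) ∧
  ∃ n : ℕ, 1 ≤ n ∧ hasPoleOrder M lam n

open scoped Classical in
/-- `Res_λ M := (2πi)⁻¹ ∮_Γ M(μ) dμ`, computed entrywise over a sufficiently small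
positively oriented circle `Γ` centered at `λ` (defined via choice as the common value
of the circle integrals over all sufficiently small radii). -/
def matResidue (M : ℂ → Matrix m m ℂ) (lam : ℂ) : Matrix m m ℂ :=
  Matrix.of fun k l =>
    if h : ∃ c : ℂ, ∀ᶠ R in 𝓝[>] (0 : ℝ),
        (2 * (π : ℂ) * Complex.I)⁻¹ * circleIntegral (fun z => M z k l) lam R = c
    then h.choose else 0

end MatrixFun




/-- model solution derivative -/
lemma hasDerivAt_csin (c : ℂ) (om x : ℝ) :
    HasDerivAt (fun y : ℝ => c * Complex.sin (om * y)) (c * om * Complex.cos (om * x)) x := by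
  have hf : HasDerivAt (fun y : ℝ => ((om * y : ℝ) : ℂ)) (om : ℂ) x := by
    simpa using (Complex.ofRealCLM.hasDerivAt (x := x)).const_mul (om : ℂ)
  have hs : HasDerivAt Complex.sin (Complex.cos ((om * x : ℝ) : ℂ)) (((om * x : ℝ) : ℂ)) :=
    Complex.hasDerivAt_sin _
  have := (hs.scomp x hf)
  have h2 : HasDerivAt (fun y : ℝ => Complex.sin (om * y)) ((om : ℂ) * Complex.cos (om * x)) x := by
    simpa [Function.comp_def, smul_eq_mul, Complex.ofReal_mul] using this
  simpa [mul_comm, mul_assoc, mul_left_comm] using h2.const_mul c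

lemma hasDerivAt_ccos (c : ℂ) (om x : ℝ) :
    HasDerivAt (fun y : ℝ => c * Complex.cos (om * y)) (-(c * om * Complex.sin (om * x))) x := by
  have hf : HasDerivAt (fun y : ℝ => ((om * y : ℝ) : ℂ)) (om : ℂ) x := by
    simpa using (Complex.ofRealCLM.hasDerivAt (x := x)).const_mul (om : ℂ)
  have hs : HasDerivAt Complex.cos (-Complex.sin ((om * x : ℝ) : ℂ)) (((om * x : ℝ) : ℂ)) :=
    Complex.hasDerivAt_cos _
  have := (hs.scomp x hf)
  have h2 : HasDerivAt (fun y : ℝ => Complex.cos (om * y)) (-((om : ℂ) * Complex.sin (om * x))) x := by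
    simpa [Function.comp_def, smul_eq_mul, Complex.ofReal_mul, mul_comm, mul_left_comm] using this
  have h3 := h2.const_mul c
  simpa [mul_comm, mul_assoc, mul_left_comm, mul_neg] using h3

lemma contDiff_csin (c : ℂ) (om : ℝ) :
    ContDiff ℝ 2 (fun y : ℝ => c * Complex.sin (om * y)) := by
  have h1 : ContDiff ℝ 2 (fun y : ℝ => ((om * y : ℝ) : ℂ)) :=
    (Complex.ofRealCLM.contDiff.comp ((contDiff_const (c := om)).mul contDiff_id))
  have hsin : ContDiff ℝ 2 Complex.sin := (Complex.contDiff_sin.restrict_scalars ℝ).of_le le_top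
  have h2 : ContDiff ℝ 2 (fun y : ℝ => Complex.sin (om * y)) := by
    have := hsin.comp h1
    simpa [Function.comp_def, Complex.ofReal_mul] using this
  exact (contDiff_const (c := c)).mul h2

/-- energy uniqueness -/
lemma ode_zero (lam : ℝ) (hlam : 0 < lam) (g : ℝ → ℂ)
    (hdg : Differentiable ℝ g) (hdg' : Differentiable ℝ (deriv g))
    (hg'' : ∀ x, deriv (deriv g) x = -(lam : ℂ) * g x)
    (h0 : g 0 = 0) (h0' : deriv g 0 = 0) : ∀ x, g x = 0 := by
  set E : ℝ → ℂ := fun x => (lam : ℂ) * (g x * star (g x)) + deriv g x * star (deriv g x) with hE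
  have hstar : ∀ a : ℂ, star (-(lam : ℂ) * a) = -(lam : ℂ) * star a := by
    intro a; simp [star_mul', Complex.star_def, Complex.conj_ofReal]
  have hDE : ∀ x, HasDerivAt E 0 x := by
    intro x
    have h1 : HasDerivAt g (deriv g x) x := (hdg x).hasDerivAt
    have h2 : HasDerivAt (deriv g) (-(lam : ℂ) * g x) x := by
      have := (hdg' x).hasDerivAt
      rwa [hg'' x] at this
    have hA := (h1.mul h1.star)
    have hB := (h2.mul h2.star)
    have hC := (hA.const_mul (lam : ℂ)).add hB
    have : ((lam : ℂ) * (deriv g x * star (g x) + g x * star (deriv g x)) +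
        (-(lam : ℂ) * g x * star (deriv g x) + deriv g x * star (-(lam : ℂ) * g x))) = 0 := by
      rw [hstar]; ring
    rwa [this] at hC
  have hconst : ∀ x, E x = E 0 :=
    fun x => is_const_of_deriv_eq_zero (fun y => (hDE y).differentiableAt)
      (fun y => (hDE y).deriv) x 0
  have hE0 : E 0 = 0 := by simp [hE, h0, h0']
  intro x
  have hx : E x = 0 := (hconst x).trans hE0
  have : ((lam * Complex.normSq (g x) + Complex.normSq (deriv g x) : ℝ) : ℂ) = 0 := by
    rw [← hx]; simp only [hE, Complex.star_def, Complex.mul_conj]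
    push_cast; ring
  have hr : lam * Complex.normSq (g x) + Complex.normSq (deriv g x) = 0 := by
    exact_mod_cast this
  have h1 : Complex.normSq (g x) = 0 := by
    nlinarith [Complex.normSq_nonneg (g x), Complex.normSq_nonneg (deriv g x)]
  exact Complex.normSq_eq_zero.mp h1


lemma sol_form (om : ℝ) (hom : 0 < om) (f : ℝ → ℂ) (hf : ContDiff ℝ 2 f)
    (hf'' : ∀ x, deriv (deriv f) x = -((om : ℂ) ^ 2) * f x) (h0 : f 0 = 0) :
    ∀ x, f x = (deriv f 0 / om) * Complex.sin (om * x) := by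
  set c : ℂ := deriv f 0 / om with hc
  have hdf : Differentiable ℝ f := hf.differentiable (by norm_num)
  have hf1 : ContDiff ℝ 1 (deriv f) := by
    have h2 : ContDiff ℝ (1 + 1) f := by
      rw [one_add_one_eq_two]; exact hf
    exact ((contDiff_succ_iff_deriv).mp h2).2.2
  have hdf' : Differentiable ℝ (deriv f) := hf1.differentiable one_ne_zero
  set g : ℝ → ℂ := fun x => f x - c * Complex.sin (om * x) with hg
  have hgd : ∀ x, HasDerivAt g (deriv f x - c * om * Complex.cos (om * x)) x := by
    intro x; exact (hdf x).hasDerivAt.sub (hasDerivAt_csin c om x)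
  have hdgeq : deriv g = fun x => deriv f x - c * om * Complex.cos (om * x) :=
    funext fun x => (hgd x).deriv
  have hdg : Differentiable ℝ g := fun x => (hgd x).differentiableAt
  have hgd' : ∀ x, HasDerivAt (deriv g)
      (deriv (deriv f) x - -(c * om * om * Complex.sin (om * x))) x := by
    intro x
    rw [hdgeq]
    have := (hdf' x).hasDerivAt.sub (hasDerivAt_ccos (c * om) om x)
    simpa [mul_assoc, Pi.sub_def] using this
  have hdg' : Differentiable ℝ (deriv g) := fun x => (hgd' x).differentiableAt
  have key : ∀ x, g x = 0 := by
    apply ode_zero (om ^ 2) (by positivity) g hdg hdg'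
    · intro x
      rw [(hgd' x).deriv, hf'' x]
      have : ((om ^ 2 : ℝ) : ℂ) = (om : ℂ) ^ 2 := by push_cast; ring
      rw [this, hg]; ring
    · simp [hg, h0]
    · rw [hdgeq]
      simp only
      simp only [Complex.ofReal_zero, mul_zero, Complex.cos_zero, mul_one, hc]
      have hom' : (om : ℂ) ≠ 0 := by exact_mod_cast hom.ne'
      field_simp
      ring
  intro x
  have := key x
  rw [hg] at this
  simpa [sub_eq_zero] using this



namespace MetricGraph

variable {G : MetricGraph}

/-- A step of a walk: an edge with a direction. -/
structure Stp (G : MetricGraph) where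
  e : G.E
  d : Bool

def Stp.src (s : Stp G) : G.V := G.esrc s.e s.d
def Stp.dst (s : Stp G) : G.V := G.edst s.e s.d
def Stp.rev (s : Stp G) : Stp G := ⟨s.e, !s.d⟩

@[simp] lemma Stp.rev_src (s : Stp G) : s.rev.src = s.dst := by
  cases s with | mk e d => cases d <;> simp [Stp.rev, Stp.src, Stp.dst, esrc, edst]

@[simp] lemma Stp.rev_dst (s : Stp G) : s.rev.dst = s.src := by
  cases s with | mk e d => cases d <;> simp [Stp.rev, Stp.src, Stp.dst, esrc, edst]

/-- Walk predicate. -/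
def IsWalk (S : Set G.E) : G.V → List (Stp G) → G.V → Prop
  | v, [], w => v = w
  | v, s :: l, w => s.e ∈ S ∧ v = s.src ∧ IsWalk S s.dst l w

/-- Parity of a walk with respect to an edge-parity function. -/
def wpar (p : G.E → Bool) (l : List (Stp G)) : Bool :=
  l.foldr (fun s b => xor (p s.e) b) false

@[simp] lemma wpar_nil (p : G.E → Bool) : wpar p ([] : List (Stp G)) = false := rfl

@[simp] lemma wpar_cons (p : G.E → Bool) (s : Stp G) (l : List (Stp G)) :
    wpar p (s :: l) = xor (p s.e) (wpar p l) := rfl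

lemma wpar_append (p : G.E → Bool) (l₁ l₂ : List (Stp G)) :
    wpar p (l₁ ++ l₂) = xor (wpar p l₁) (wpar p l₂) := by
  induction l₁ with
  | nil => simp
  | cons s l ih => simp [ih, Bool.xor_assoc]

lemma wpar_rev (p : G.E → Bool) (l : List (Stp G)) :
    wpar p (l.reverse.map Stp.rev) = wpar p l := by
  induction l with
  | nil => simp
  | cons s l ih =>
    simp only [List.reverse_cons, List.map_append, List.map_cons, List.map_nil,
      wpar_append, ih, wpar_cons, wpar_nil]
    simp only [Stp.rev]
    cases hpe : p s.e <;> cases hw : wpar p l <;> simp [hpe, hw]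

lemma walk_append {S : Set G.E} {v u w : G.V} {l₁ l₂ : List (Stp G)}
    (h₁ : IsWalk S v l₁ u) (h₂ : IsWalk S u l₂ w) : IsWalk S v (l₁ ++ l₂) w := by
  induction l₁ generalizing v with
  | nil => cases h₁; exact h₂
  | cons s l ih => exact ⟨h₁.1, h₁.2.1, ih h₁.2.2⟩

lemma walk_reverse {S : Set G.E} {v w : G.V} {l : List (Stp G)}
    (h : IsWalk S v l w) : IsWalk S w (l.reverse.map Stp.rev) v := by
  induction l generalizing v with
  | nil => cases h; exact rfl
  | cons s l ih =>
    simp only [List.reverse_cons, List.map_append, List.map_cons, List.map_nil]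
    exact walk_append (ih h.2.2) ⟨h.1, by simp, by rw [show (Stp.rev s).dst = s.src from Stp.rev_dst s]; exact h.2.1.symm⟩

/-- End vertex of a walk. -/
def wend (v : G.V) (l : List (Stp G)) : G.V := l.foldl (fun _ s => s.dst) v

@[simp] lemma wend_nil (v : G.V) : wend v ([] : List (Stp G)) = v := rfl

@[simp] lemma wend_cons (v : G.V) (s : Stp G) (l : List (Stp G)) :
    wend v (s :: l) = wend s.dst l := rfl

lemma wend_append (v : G.V) (l₁ l₂ : List (Stp G)) :
    wend v (l₁ ++ l₂) = wend (wend v l₁) l₂ := by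
  simp [wend, List.foldl_append]

lemma walk_wend {S : Set G.E} {v w : G.V} {l : List (Stp G)} (h : IsWalk S v l w) :
    wend v l = w := by
  induction l generalizing v with
  | nil => cases h; rfl
  | cons s l ih => simpa using ih h.2.2

/-- The `i`-th vertex along a walk. -/
def vtx (v : G.V) (l : List (Stp G)) (i : ℕ) : G.V := wend v (l.take i)

@[simp] lemma vtx_zero (v : G.V) (l : List (Stp G)) : vtx v l 0 = v := rfl

lemma walk_take_drop {S : Set G.E} {v w : G.V} {l : List (Stp G)} (h : IsWalk S v l w)
    (n : ℕ) : IsWalk S v (l.take n) (vtx v l n) ∧ IsWalk S (vtx v l n) (l.drop n) w := by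
  induction l generalizing v n with
  | nil => cases h; cases n <;> exact ⟨rfl, rfl⟩
  | cons s l ih =>
    cases n with
    | zero => exact ⟨rfl, h⟩
    | succ n =>
      obtain ⟨h1, h2⟩ := ih h.2.2 n
      exact ⟨⟨h.1, h.2.1, h1⟩, h2⟩

lemma vtx_src {S : Set G.E} {v w : G.V} {l : List (Stp G)} (h : IsWalk S v l w)
    (i : ℕ) (hi : i < l.length) :
    vtx v l i = (l.get ⟨i, hi⟩).src ∧ vtx v l (i + 1) = (l.get ⟨i, hi⟩).dst := by
  induction l generalizing v i with
  | nil => simp at hi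
  | cons s l ih =>
    cases i with
    | zero =>
      refine ⟨h.2.1, ?_⟩
      simp [vtx]
    | succ i =>
      have := ih h.2.2 i (by simpa using hi)
      exact ⟨this.1, this.2⟩

lemma walk_mem {S : Set G.E} {v w : G.V} {l : List (Stp G)} (h : IsWalk S v l w)
    (i : ℕ) (hi : i < l.length) : (l.get ⟨i, hi⟩).e ∈ S := by
  induction l generalizing v i with
  | nil => simp at hi
  | cons s l ih =>
    cases i with
    | zero => exact h.1
    | succ i => exact ih h.2.2 i (by simpa using hi)

lemma wpar_eq_bodd (p : G.E → Bool) (k : G.E → ℕ) (hp : ∀ e, p e = Nat.bodd (k e))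
    (l : List (Stp G)) : wpar p l = Nat.bodd ((l.map fun s => k s.e).sum) := by
  induction l with
  | nil => simp
  | cons s l ih => simp [ih, hp, Nat.bodd_add]

lemma list_sum_eq_fin_sum (k : G.E → ℕ) (l : List (Stp G)) :
    (l.map fun s => k s.e).sum = ∑ i : Fin l.length, k ((l.get i).e) := by
  induction l with
  | nil => simp
  | cons s l ih => simp [ih, Fin.sum_univ_succ]

end MetricGraph

namespace MetricGraph

variable {G : MetricGraph}

lemma wpar_len2 (p : G.E → Bool) (l : List (Stp G)) (h0 : 0 < l.length)
    (h1 : 1 < l.length) (h : l.length = 2) :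
    wpar p l = xor (p (l.get ⟨0, h0⟩).e) (p (l.get ⟨1, h1⟩).e) := by
  match l with
  | [a, b] => simp [wpar]

lemma exists_cycle_of_odd_walk (S : Set G.E) (x : ℝ) (k : G.E → ℕ)
    (hk : ∀ e ∈ S, G.L e = k e * x) :
    ∀ (N : ℕ) (l : List (Stp G)) (v : G.V), l.length ≤ N → IsWalk S v l v →
      wpar (fun e => Nat.bodd (k e)) l = true →
      ∃ c : G.Cycle, c.inSub S ∧ c.oddLength x := by
  classical
  set p : G.E → Bool := fun e => Nat.bodd (k e) with hp
  intro N
  induction N with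
  | zero =>
    intro l v hlen hw hpar
    have : l = [] := by
      rw [← List.length_eq_zero_iff]; omega
    subst this; simp at hpar
  | succ N IH =>
    intro l v hlen hw hpar
    set n := l.length with hn
    by_cases hP : ∃ i j, i < j ∧ j ≤ n ∧ j - i < n ∧ vtx v l i = vtx v l j
    · -- split the walk into two shorter closed walks
      obtain ⟨i, j, hij, hjn, hgap, hvv⟩ := hP
      set l₁ := l.take i with hl₁
      set l₂ := (l.drop i).take (j - i) with hl₂
      set l₃ := l.drop j with hl₃
      have htj : l.take j = l₁ ++ l₂ := by
        rw [hl₁, hl₂, ← List.take_add]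
        congr 1
        omega
      have hd : IsWalk S (vtx v l i) (l.drop i) v := (walk_take_drop hw i).2
      have hinner0 := (walk_take_drop hd (j - i)).1
      have hvj_eq : vtx (vtx v l i) (l.drop i) (j - i) = vtx v l j := by
        show wend (vtx v l i) ((l.drop i).take (j - i)) = wend v (l.take j)
        rw [htj, wend_append]
        rfl
      have hinner : IsWalk S (vtx v l i) l₂ (vtx v l i) := by
        rw [hl₂]
        have := hinner0
        rw [hvj_eq, ← hvv] at this
        exact this
      have houter : IsWalk S v (l₁ ++ l₃) v := by
        have h3 : IsWalk S (vtx v l j) l₃ v := (walk_take_drop hw j).2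
        rw [← hvv] at h3
        exact walk_append (walk_take_drop hw i).1 h3
      have hlen2 : l₂.length = j - i := by
        rw [hl₂, List.length_take, List.length_drop]
        omega
      have hlen13 : (l₁ ++ l₃).length = n - (j - i) := by
        rw [List.length_append, hl₁, hl₃, List.length_take, List.length_drop]
        omega
      have hdecomp : l = (l₁ ++ l₂) ++ l₃ := by
        rw [← htj, hl₃]
        exact (List.take_append_drop j l).symm
      have hpartot : xor (wpar p l₂) (wpar p (l₁ ++ l₃)) = true := by
        rw [wpar_append]
        rw [hdecomp, wpar_append, wpar_append] at hpar
        cases hw2 : wpar p l₂ <;> cases hw1 : wpar p l₁ <;> cases hw3 : wpar p l₃ <;>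
          simp [hw1, hw2, hw3] at hpar ⊢
      cases hc2 : wpar p l₂ with
      | true =>
        exact IH l₂ (vtx v l i) (by omega) hinner hc2
      | false =>
        rw [hc2] at hpartot
        simp at hpartot
        exact IH (l₁ ++ l₃) v (by omega) houter hpartot
    · -- no nontrivial repeated vertex: build a cycle
      push_neg at hP
      have hnpos : 0 < n := by
        rcases Nat.eq_zero_or_pos n with h0 | h
        · exfalso
          have : l = [] := by rwa [← List.length_eq_zero_iff, ← hn]
          subst this; simp at hpar
        · exact h
      have hvtx_n : vtx v l n = v := by
        show wend v (l.take n) = v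
        rw [hn, List.take_length]
        exact walk_wend hw
      have hdist : ∀ a b : ℕ, a < n → b < n → vtx v l a = vtx v l b → a = b := by
        intro a b ha hb hab
        by_contra hne
        rcases Nat.lt_or_ge a b with h | h
        · exact hP a b h (by omega) (by omega) hab
        · exact hP b a (by omega) (by omega) (by omega) hab.symm
      refine ⟨⟨n, hnpos, fun i => (l.get ⟨i, i.2⟩).e, fun i => (l.get ⟨i, i.2⟩).d,
        ?_, ?_, ?_⟩, ?_, ?_⟩
      · -- edge_inj
        have key : ∀ i j : Fin n, (i : ℕ) < (j : ℕ) →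
            (l.get ⟨i, i.2⟩).e = (l.get ⟨j, j.2⟩).e → False := by
          intro i j hij heq
          have hi2 := i.2
          have hj2 := j.2
          have hsd_i := vtx_src hw i i.2
          have hsd_j := vtx_src hw j j.2
          by_cases hd : (l.get ⟨i, i.2⟩).d = (l.get ⟨j, j.2⟩).d
          · have : vtx v l i = vtx v l j := by
              rw [hsd_i.1, hsd_j.1]
              show G.esrc (l.get ⟨i, i.2⟩).e (l.get ⟨i, i.2⟩).d = _
              rw [heq, hd]
              rfl
            exact absurd (hdist i j i.2 j.2 this) (by omega)
          · have hd' : (l.get ⟨j, j.2⟩).d = !(l.get ⟨i, i.2⟩).d := by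
              cases h1 : (l.get ⟨i, i.2⟩).d <;> cases h2 : (l.get ⟨j, j.2⟩).d <;>
                simp_all
            have hsrc_j : (l.get ⟨j, j.2⟩).src = (l.get ⟨i, i.2⟩).dst := by
              show G.esrc _ _ = G.edst _ _
              rw [heq, hd']
              cases h1 : (l.get ⟨i, i.2⟩).d <;> simp [esrc, edst]
            have hdst_j : (l.get ⟨j, j.2⟩).dst = (l.get ⟨i, i.2⟩).src := by
              show G.edst _ _ = G.esrc _ _
              rw [heq, hd']
              cases h1 : (l.get ⟨i, i.2⟩).d <;> simp [esrc, edst]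
            have h1 : vtx v l ((i : ℕ) + 1) = vtx v l j := by
              rw [hsd_i.2, hsd_j.1, hsrc_j]
            have h2 : vtx v l ((j : ℕ) + 1) = vtx v l i := by
              rw [hsd_j.2, hsd_i.1, hdst_j]
            have hij1 : (i : ℕ) + 1 = (j : ℕ) := by
              by_contra hne
              exact hP ((i : ℕ) + 1) j (by omega) (by omega) (by omega) h1
            have h2' : vtx v l ((i : ℕ)) = vtx v l ((i : ℕ) + 2) := by
              have hfix : (i : ℕ) + 2 = (j : ℕ) + 1 := by omega
              rw [hfix]
              exact h2.symm
            have hn2 : n = 2 ∧ (i : ℕ) = 0 := by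
              by_contra hcon
              have hle : (i : ℕ) + 2 ≤ n := by omega
              have : ¬ ((i : ℕ) = 0 ∧ (i : ℕ) + 2 = n) := by
                intro ⟨a1, a2⟩; exact hcon ⟨by omega, a1⟩
              exact hP (i : ℕ) ((i : ℕ) + 2) (by omega) hle (by omega) h2'
            obtain ⟨hn2', hi0⟩ := hn2
            have hj1 : (j : ℕ) = 1 := by omega
            have hl0 : 0 < l.length := by omega
            have hl1 : 1 < l.length := by omega
            have e0 : (⟨(i : ℕ), i.2⟩ : Fin l.length) = ⟨0, hl0⟩ := by
              ext; exact hi0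
            have e1 : (⟨(j : ℕ), j.2⟩ : Fin l.length) = ⟨1, hl1⟩ := by
              ext; exact hj1
            rw [e0, e1] at heq
            rw [wpar_len2 p l hl0 hl1 (by omega), heq] at hpar
            simp at hpar
        intro i j heq
        rcases lt_trichotomy (i : ℕ) (j : ℕ) with h | h | h
        · exact absurd heq (fun he => key i j h he)
        · exact Fin.ext h
        · exact absurd heq.symm (fun he => key j i h he)
      · -- vert_inj
        intro i j heq
        have hsd_i := vtx_src hw i i.2
        have hsd_j := vtx_src hw j j.2
        have : vtx v l i = vtx v l j := by
          rw [hsd_i.1, hsd_j.1]; exact heq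
        exact Fin.ext (hdist i j i.2 j.2 this)
      · -- chain
        intro i
        have hi2 := i.2
        have hsd_i := vtx_src hw i i.2
        by_cases hin : (i : ℕ) + 1 < n
        · have hmod : ((i : ℕ) + 1) % n = (i : ℕ) + 1 := Nat.mod_eq_of_lt hin
          have hsd_i1 := vtx_src hw ((i : ℕ) + 1) hin
          show G.edst _ _ = G.esrc _ _
          have e2 : G.esrc (l.get ⟨((i : ℕ) + 1) % n, Nat.mod_lt _ hnpos⟩).e
              (l.get ⟨((i : ℕ) + 1) % n, Nat.mod_lt _ hnpos⟩).d = vtx v l ((i : ℕ) + 1) := by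
            have heq : (⟨((i : ℕ) + 1) % n, Nat.mod_lt _ hnpos⟩ : Fin l.length) =
                ⟨(i : ℕ) + 1, hin⟩ := by
              ext; exact hmod
            rw [heq]
            exact hsd_i1.1.symm
          rw [e2]
          exact hsd_i.2.symm ▸ rfl
        · have hieq : (i : ℕ) + 1 = n := by omega
          have hmod : ((i : ℕ) + 1) % n = 0 := by rw [hieq]; exact Nat.mod_self n
          show G.edst _ _ = G.esrc _ _
          have e2 : G.esrc (l.get ⟨((i : ℕ) + 1) % n, Nat.mod_lt _ hnpos⟩).e
              (l.get ⟨((i : ℕ) + 1) % n, Nat.mod_lt _ hnpos⟩).d = vtx v l 0 := by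
            have heq : (⟨((i : ℕ) + 1) % n, Nat.mod_lt _ hnpos⟩ : Fin l.length) =
                ⟨0, hnpos⟩ := by
              ext; exact hmod
            rw [heq]
            exact (vtx_src hw 0 hnpos).1.symm
          rw [e2]
          have : vtx v l ((i : ℕ) + 1) = vtx v l 0 := by
            rw [hieq, hvtx_n]
            rfl
          rw [← this]
          exact hsd_i.2.symm ▸ rfl
      · -- inSub
        intro i
        exact walk_mem hw i i.2
      · -- oddLength
        refine ⟨∑ i : Fin n, k ((l.get ⟨i, i.2⟩).e), ?_, ?_⟩
        · have hb : Nat.bodd ((l.map fun s => k s.e).sum) = true := by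
            rw [← wpar_eq_bodd p k (fun e => rfl) l]
            exact hpar
          rw [list_sum_eq_fin_sum k l] at hb
          have hcast : (∑ i : Fin n, k ((l.get ⟨i, i.2⟩).e)) =
              ∑ i : Fin l.length, k ((l.get i).e) := rfl
          rw [hcast, Nat.odd_iff, Nat.mod_two_of_bodd, hb]
          rfl
        · show (∑ i : Fin n, G.L ((l.get ⟨i, i.2⟩).e)) = _
          rw [Finset.sum_congr rfl (fun t _ => hk _ (walk_mem hw t.1 t.2))]
          push_cast
          rw [← Finset.sum_mul]

end MetricGraph

namespace MetricGraph

variable {G : MetricGraph}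

lemma connRel_walk {S : Set G.E} {v w : G.V} (h : G.connRel S v w) :
    ∃ l, IsWalk S v l w := by
  induction h with
  | rel a b hab =>
    obtain ⟨e, he, ho, ht⟩ := hab
    refine ⟨[⟨e, true⟩], he, ?_, ?_⟩
    · show a = G.esrc e true
      simp [esrc, ho]
    · show G.edst e true = b
      simp [edst, ht]
  | refl a => exact ⟨[], rfl⟩
  | symm a b _ ih =>
    obtain ⟨l, hl⟩ := ih
    exact ⟨_, walk_reverse hl⟩
  | trans a b c _ _ ih1 ih2 =>
    obtain ⟨l1, h1⟩ := ih1
    obtain ⟨l2, h2⟩ := ih2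
    exact ⟨_, walk_append h1 h2⟩

lemma exists_switch (S : Set G.E) (p : G.E → Bool)
    (hnowalk : ∀ (l : List (Stp G)) (v : G.V), IsWalk S v l v → wpar p l = false)
    (v₀ : G.V)
    (hconn : ∀ v ∈ G.incVerts S, G.connRel S v₀ v) :
    ∃ τ : G.V → Bool, ∀ e ∈ S, τ (G.t e) = xor (τ (G.o e)) (p e) := by
  classical
  have huniq : ∀ v l₁ l₂, IsWalk S v₀ l₁ v → IsWalk S v₀ l₂ v →
      wpar p l₁ = wpar p l₂ := by
    intro v l₁ l₂ h1 h2
    have hcl : IsWalk S v₀ (l₁ ++ l₂.reverse.map Stp.rev) v₀ :=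
      walk_append h1 (walk_reverse h2)
    have hz := hnowalk _ _ hcl
    rw [wpar_append, wpar_rev] at hz
    cases c1 : wpar p l₁ <;> cases c2 : wpar p l₂ <;> simp_all
  refine ⟨fun v => if h : ∃ l, IsWalk S v₀ l v then wpar p h.choose else false, ?_⟩
  intro e he
  have hoV : G.o e ∈ G.incVerts S := ⟨e, he, Or.inl rfl⟩
  obtain ⟨l, hl⟩ := connRel_walk (hconn _ hoV)
  have hstep : IsWalk S (G.o e) [(⟨e, true⟩ : Stp G)] (G.t e) := by
    refine ⟨he, ?_, ?_⟩
    · show G.o e = G.esrc e true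
      simp [esrc]
    · show G.edst e true = G.t e
      simp [edst]
  have hex_o : ∃ l', IsWalk S v₀ l' (G.o e) := ⟨l, hl⟩
  have hex_t : ∃ l', IsWalk S v₀ l' (G.t e) := ⟨l ++ [⟨e, true⟩], walk_append hl hstep⟩
  simp only []
  rw [dif_pos hex_t, dif_pos hex_o]
  have h1 := huniq _ _ _ hex_t.choose_spec (walk_append hl hstep)
  have h2 := huniq _ _ _ hex_o.choose_spec hl
  rw [h1, h2, wpar_append]
  simp [wpar]

end MetricGraph

namespace MetricGraph

variable {G : MetricGraph}

open Module

/-- The subspace of Kirchhoff edge-coefficient vectors supported on `S`. -/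
def kirchSub (G : MetricGraph) (S : Set G.E) (σ : G.E → ℂ) : Submodule ℂ (G.E → ℂ) where
  carrier := {b | (∀ e ∉ S, b e = 0) ∧ ∀ v,
    (∑ e ∈ Finset.univ.filter fun e => G.t e = v, b e * σ e) =
      ∑ e ∈ Finset.univ.filter fun e => G.o e = v, b e}
  zero_mem' := by
    constructor
    · intro e _; rfl
    · intro v; simp
  add_mem' := by
    rintro a b ⟨ha1, ha2⟩ ⟨hb1, hb2⟩
    constructor
    · intro e he; simp [ha1 e he, hb1 e he]
    · intro v
      simp only [Pi.add_apply, add_mul, Finset.sum_add_distrib, ha2 v, hb2 v]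
  smul_mem' := by
    rintro c a ⟨ha1, ha2⟩
    constructor
    · intro e he; simp [ha1 e he]
    · intro v
      simp only [Pi.smul_apply, smul_eq_mul, mul_assoc, ← Finset.mul_sum, ha2 v]

lemma sum_support_subtype {S : Set G.E} [Fintype {e : G.E // e ∈ S}] (F : G.E → ℂ)
    (hF : ∀ e ∉ S, F e = 0) :
    (∑ e : G.E, F e) = ∑ ee : {e : G.E // e ∈ S}, F ee.1 := by
  classical
  rw [← Finset.sum_filter_of_ne (s := Finset.univ) (p := fun e => e ∈ S)
    (fun e _ hne => by by_contra h; exact hne (hF e h))]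
  exact Finset.sum_subtype _ (fun e => by simp) F

end MetricGraph

namespace MetricGraph

variable {G : MetricGraph}

open Module

lemma finrank_kirch (S : Set G.E) (σ : G.E → ℂ) (s : G.V → ℂ)
    (hs2 : ∀ v, s v * s v = 1)
    (hsσ : ∀ e ∈ S, σ e = s (G.o e) * s (G.t e))
    (hconn : ∀ v ∈ G.incVerts S, ∀ w ∈ G.incVerts S, G.connRel S v w)
    (hne : S.Nonempty) :
    (Module.finrank ℂ (kirchSub G S σ) : ℤ) =
      (S.ncard : ℤ) - ((G.incVerts S).ncard : ℤ) + 1 := by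
  classical
  letI : Fintype {e : G.E // e ∈ S} := S.toFinite.fintype
  letI : Fintype {v : G.V // v ∈ G.incVerts S} := (G.incVerts S).toFinite.fintype
  have hmem_t : ∀ e : {e : G.E // e ∈ S}, G.t e.1 ∈ G.incVerts S :=
    fun e => ⟨e.1, e.2, Or.inr rfl⟩
  have hmem_o : ∀ e : {e : G.E // e ∈ S}, G.o e.1 ∈ G.incVerts S :=
    fun e => ⟨e.1, e.2, Or.inl rfl⟩
  set M : Matrix {v : G.V // v ∈ G.incVerts S} {e : G.E // e ∈ S} ℂ := fun v e =>
    (if G.t e.1 = v.1 then σ e.1 else 0) - (if G.o e.1 = v.1 then 1 else 0) with hM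
  set D := M.mulVecLin with hD
  have hDapply : ∀ (c : {e : G.E // e ∈ S} → ℂ) (v : {v : G.V // v ∈ G.incVerts S}),
      D c v = ∑ e : {e : G.E // e ∈ S}, M v e * c e := by
    intro c v
    simp [hD, Matrix.mulVecLin_apply, Matrix.mulVec, dotProduct]
  -- extension by zero
  set ext0 : ({e : G.E // e ∈ S} → ℂ) →ₗ[ℂ] (G.E → ℂ) :=
    { toFun := fun c e => if h : e ∈ S then c ⟨e, h⟩ else 0
      map_add' := by intro a b; funext e; by_cases h : e ∈ S <;> simp [h]
      map_smul' := by intro m a; funext e; by_cases h : e ∈ S <;> simp [h] } with hext0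
  have hext0_apply : ∀ c e, ext0 c e = if h : e ∈ S then c ⟨e, h⟩ else 0 := fun c e => rfl
  have hext0_sub : ∀ (c : {e : G.E // e ∈ S} → ℂ) (ee : {e : G.E // e ∈ S}),
      ext0 c ee.1 = c ee := by
    intro c ee
    rw [hext0_apply, dif_pos ee.2]
  have hext0_inj : Function.Injective ext0 := by
    intro a b hab
    funext ee
    have h1 := hext0_sub a ee
    have h2 := hext0_sub b ee
    rw [hab] at h1
    rw [← h1, h2]
  -- sum transfer
  have htrans_t : ∀ (b : G.E → ℂ), (∀ e ∉ S, b e = 0) → ∀ v : G.V,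
      (∑ e ∈ Finset.univ.filter fun e => G.t e = v, b e * σ e) =
        ∑ ee : {e : G.E // e ∈ S}, (if G.t ee.1 = v then b ee.1 * σ ee.1 else 0) := by
    intro b hb v
    rw [Finset.sum_filter]
    exact sum_support_subtype _ (fun e he => by simp [hb e he])
  have htrans_o : ∀ (b : G.E → ℂ), (∀ e ∉ S, b e = 0) → ∀ v : G.V,
      (∑ e ∈ Finset.univ.filter fun e => G.o e = v, b e) =
        ∑ ee : {e : G.E // e ∈ S}, (if G.o ee.1 = v then b ee.1 else 0) := by
    intro b hb v
    rw [Finset.sum_filter]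
    exact sum_support_subtype _ (fun e he => by simp [hb e he])
  have hMsum : ∀ (c : {e : G.E // e ∈ S} → ℂ) (v : {v : G.V // v ∈ G.incVerts S}),
      (∑ e : {e : G.E // e ∈ S}, M v e * c e) =
        (∑ ee : {e : G.E // e ∈ S}, (if G.t ee.1 = v.1 then c ee * σ ee.1 else 0)) -
          (∑ ee : {e : G.E // e ∈ S}, (if G.o ee.1 = v.1 then c ee else 0)) := by
    intro c v
    rw [← Finset.sum_sub_distrib]
    apply Finset.sum_congr rfl
    intro ee _
    rw [hM]
    by_cases h1 : G.t ee.1 = v.1 <;> by_cases h2 : G.o ee.1 = v.1 <;>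
      simp [h1, h2] <;> ring
  -- kirchSub = map ext0 (ker D)
  have hKmap : kirchSub G S σ = Submodule.map ext0 (LinearMap.ker D) := by
    apply le_antisymm
    · rintro b ⟨hb1, hb2⟩
      refine ⟨fun ee => b ee.1, ?_, ?_⟩
      · show D (fun ee => b ee.1) = 0
        funext v
        rw [hDapply, hMsum]
        have h1 := htrans_t b hb1 v.1
        have h2 := htrans_o b hb1 v.1
        rw [← h1, ← h2, hb2 v.1]
        simp
      · funext e
        by_cases h : e ∈ S
        · simp [hext0_apply, h]
        · simp [hext0_apply, h, hb1 e h]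
    · rintro b ⟨c, hc, rfl⟩
      have hsupp : ∀ e ∉ S, ext0 c e = 0 := fun e he => by simp [hext0_apply, he]
      refine ⟨hsupp, ?_⟩
      intro v
      by_cases hv : v ∈ G.incVerts S
      · have h0 : D c ⟨v, hv⟩ = 0 := by
          rw [LinearMap.mem_ker.mp hc]
          rfl
        rw [hDapply, hMsum] at h0
        rw [htrans_t _ hsupp v, htrans_o _ hsupp v]
        have hrw : ∀ ee : {e : G.E // e ∈ S},
            (if G.t ee.1 = v then ext0 c ee.1 * σ ee.1 else 0) =
            (if G.t ee.1 = (⟨v, hv⟩ : {v : G.V // v ∈ G.incVerts S}).1 then c ee * σ ee.1 else 0) := by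
          intro ee
          rw [hext0_sub]
        have hrw2 : ∀ ee : {e : G.E // e ∈ S},
            (if G.o ee.1 = v then ext0 c ee.1 else 0) =
            (if G.o ee.1 = (⟨v, hv⟩ : {v : G.V // v ∈ G.incVerts S}).1 then c ee else 0) := by
          intro ee
          rw [hext0_sub]
        rw [Finset.sum_congr rfl (fun ee _ => hrw ee),
          Finset.sum_congr rfl (fun ee _ => hrw2 ee)]
        exact sub_eq_zero.mp h0
      · have ht0 : ∀ e ∈ Finset.univ.filter (fun e => G.t e = v), ext0 c e * σ e = 0 := by
          intro e he
          simp only [Finset.mem_filter] at he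
          by_cases hS : e ∈ S
          · exact absurd ⟨e, hS, Or.inr he.2⟩ hv
          · rw [hsupp e hS, zero_mul]
        have ho0 : ∀ e ∈ Finset.univ.filter (fun e => G.o e = v), ext0 c e = 0 := by
          intro e he
          simp only [Finset.mem_filter] at he
          by_cases hS : e ∈ S
          · exact absurd ⟨e, hS, Or.inl he.2⟩ hv
          · exact hsupp e hS
        rw [Finset.sum_eq_zero ht0, Finset.sum_eq_zero ho0]
  -- base vertex
  obtain ⟨e₀, he₀⟩ := hne
  set v₀ : {v : G.V // v ∈ G.incVerts S} := ⟨G.o e₀, ⟨e₀, he₀, Or.inl rfl⟩⟩ with hv₀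
  -- the functional ε
  set ε : ({v : G.V // v ∈ G.incVerts S} → ℂ) →ₗ[ℂ] ℂ :=
    ∑ v : {v : G.V // v ∈ G.incVerts S}, s v.1 • LinearMap.proj v with hε
  have hεapply : ∀ φ, ε φ = ∑ v : {v : G.V // v ∈ G.incVerts S}, s v.1 * φ v := by
    intro φ
    simp [hε, LinearMap.sum_apply, LinearMap.smul_apply, LinearMap.proj_apply, smul_eq_mul]
  set ψ : {v : G.V // v ∈ G.incVerts S} → ({v : G.V // v ∈ G.incVerts S} → ℂ) :=
    fun u w => if w = u then s u.1 else 0 with hψ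
  have hεψ : ∀ u, ε (ψ u) = 1 := by
    intro u
    rw [hεapply, Finset.sum_eq_single u]
    · simp only [hψ, if_pos rfl]
      exact hs2 u.1
    · intro w _ hw
      simp [hψ, hw]
    · intro h; exact absurd (Finset.mem_univ u) h
  have hψD : ∀ (e : G.E) (he : e ∈ S),
      ψ ⟨G.t e, hmem_t ⟨e, he⟩⟩ - ψ ⟨G.o e, hmem_o ⟨e, he⟩⟩ ∈ LinearMap.range D := by
    intro e he
    refine ⟨s (G.o e) • (Pi.single (⟨e, he⟩ : {e : G.E // e ∈ S}) (1 : ℂ) :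
      {e : G.E // e ∈ S} → ℂ), ?_⟩
    funext v
    have hsingle : D (Pi.single (⟨e, he⟩ : {e : G.E // e ∈ S}) (1 : ℂ)) v = M v ⟨e, he⟩ := by
      rw [hDapply, Finset.sum_eq_single (⟨e, he⟩ : {e : G.E // e ∈ S})]
      · simp
      · intro b _ hb
        rw [Pi.single_eq_of_ne hb, mul_zero]
      · intro h; exact absurd (Finset.mem_univ _) h
    rw [map_smul, Pi.smul_apply, hsingle]
    have hv_t : (v = ⟨G.t e, hmem_t ⟨e, he⟩⟩) ↔ G.t e = v.1 := by
      rw [Subtype.ext_iff]; exact eq_comm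
    have hv_o : (v = ⟨G.o e, hmem_o ⟨e, he⟩⟩) ↔ G.o e = v.1 := by
      rw [Subtype.ext_iff]; exact eq_comm
    show s (G.o e) * M v ⟨e, he⟩ = ψ ⟨G.t e, hmem_t ⟨e, he⟩⟩ v - ψ ⟨G.o e, hmem_o ⟨e, he⟩⟩ v
    rw [hM]
    simp only [hψ]
    by_cases h1 : G.t e = v.1 <;> by_cases h2 : G.o e = v.1
    · rw [if_pos h1, if_pos h2, if_pos (hv_t.mpr h1), if_pos (hv_o.mpr h2), hsσ e he]
      have hot : G.o e = G.t e := h2.trans h1.symm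
      rw [hot]
      linear_combination (s (G.t e)) * hs2 (G.t e)
    · rw [if_pos h1, if_neg h2, if_pos (hv_t.mpr h1), if_neg (fun hc => h2 (hv_o.mp hc)),
        hsσ e he]
      linear_combination (s (G.t e)) * hs2 (G.o e)
    · rw [if_neg h1, if_pos h2, if_neg (fun hc => h1 (hv_t.mp hc)), if_pos (hv_o.mpr h2)]
      ring
    · rw [if_neg h1, if_neg h2, if_neg (fun hc => h1 (hv_t.mp hc)),
        if_neg (fun hc => h2 (hv_o.mp hc))]
      ring
  -- connectivity gives all ψ-differences
  have hψ_diff : ∀ u w : {v : G.V // v ∈ G.incVerts S}, ψ u - ψ w ∈ LinearMap.range D := by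
    set Ψ : G.V → ({v : G.V // v ∈ G.incVerts S} → ℂ) :=
      fun a => if h : a ∈ G.incVerts S then ψ ⟨a, h⟩ else 0 with hΨ
    have claim : ∀ a b : G.V, G.connRel S a b → Ψ a - Ψ b ∈ LinearMap.range D := by
      intro a b h
      induction h with
      | rel a b hab =>
        obtain ⟨e, he, ho, ht⟩ := hab
        have hmm := neg_mem (hψD e he)
        rw [neg_sub] at hmm
        have ha : a ∈ G.incVerts S := ho ▸ hmem_o ⟨e, he⟩
        have hb : b ∈ G.incVerts S := ht ▸ hmem_t ⟨e, he⟩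
        rw [hΨ]
        simp only [dif_pos ha, dif_pos hb]
        have h1 : (⟨a, ha⟩ : {v : G.V // v ∈ G.incVerts S}) = ⟨G.o e, hmem_o ⟨e, he⟩⟩ :=
          Subtype.ext ho.symm
        have h2 : (⟨b, hb⟩ : {v : G.V // v ∈ G.incVerts S}) = ⟨G.t e, hmem_t ⟨e, he⟩⟩ :=
          Subtype.ext ht.symm
        rw [h1, h2]
        exact hmm
      | refl a =>
        rw [sub_self]
        exact zero_mem _
      | symm a b _ ih =>
        have := neg_mem ih
        rwa [neg_sub] at this
      | trans a b c _ _ ih1 ih2 =>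
        have := add_mem ih1 ih2
        rwa [sub_add_sub_cancel] at this
    intro u w
    have h := claim u.1 w.1 (hconn u.1 u.2 w.1 w.2)
    rw [hΨ] at h
    simp only [dif_pos u.2, dif_pos w.2] at h
    convert h using 2 <;> exact (Subtype.eta _ _).symm
  -- range D = ker ε
  have hrange : LinearMap.range D = LinearMap.ker ε := by
    apply le_antisymm
    · rintro φ ⟨c, rfl⟩
      rw [LinearMap.mem_ker, hεapply]
      have hsw : ∀ v : {v : G.V // v ∈ G.incVerts S},
          s v.1 * D c v = ∑ e : {e : G.E // e ∈ S}, s v.1 * M v e * c e := by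
        intro v
        rw [hDapply, Finset.mul_sum]
        exact Finset.sum_congr rfl fun e _ => (mul_assoc _ _ _).symm
      rw [Finset.sum_congr rfl fun v _ => hsw v, Finset.sum_comm]
      apply Finset.sum_eq_zero
      intro e _
      have hinner : (∑ v : {v : G.V // v ∈ G.incVerts S}, s v.1 * M v e) = 0 := by
        have hsub : ∀ v : {v : G.V // v ∈ G.incVerts S},
            s v.1 * M v e = (if G.t e.1 = v.1 then s v.1 * σ e.1 else 0) -
              (if G.o e.1 = v.1 then s v.1 else 0) := by
          intro v
          rw [hM]
          by_cases h1 : G.t e.1 = v.1 <;> by_cases h2 : G.o e.1 = v.1 <;>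
            simp [h1, h2] <;> ring
        rw [Finset.sum_congr rfl fun v _ => hsub v, Finset.sum_sub_distrib]
        have hT : (∑ v : {v : G.V // v ∈ G.incVerts S},
            (if G.t e.1 = v.1 then s v.1 * σ e.1 else 0)) = s (G.t e.1) * σ e.1 := by
          rw [Finset.sum_eq_single (⟨G.t e.1, hmem_t e⟩ : {v : G.V // v ∈ G.incVerts S})]
          · rw [if_pos rfl]
          · intro w _ hw
            rw [if_neg (fun hc => hw (Subtype.ext hc.symm))]
          · intro h; exact absurd (Finset.mem_univ _) h
        have hO : (∑ v : {v : G.V // v ∈ G.incVerts S},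
            (if G.o e.1 = v.1 then s v.1 else 0)) = s (G.o e.1) := by
          rw [Finset.sum_eq_single (⟨G.o e.1, hmem_o e⟩ : {v : G.V // v ∈ G.incVerts S})]
          · rw [if_pos rfl]
          · intro w _ hw
            rw [if_neg (fun hc => hw (Subtype.ext hc.symm))]
          · intro h; exact absurd (Finset.mem_univ _) h
        rw [hT, hO, hsσ e.1 e.2]
        linear_combination (s (G.o e.1)) * hs2 (G.t e.1)
      calc (∑ v : {v : G.V // v ∈ G.incVerts S}, s v.1 * M v e * c e)
          = (∑ v : {v : G.V // v ∈ G.incVerts S}, s v.1 * M v e) * c e := by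
            rw [Finset.sum_mul]
        _ = 0 := by rw [hinner, zero_mul]
    · intro φ hφ
      rw [LinearMap.mem_ker] at hφ
      have h1 : (∑ u : {v : G.V // v ∈ G.incVerts S}, (s u.1 * φ u) • ψ u) = φ := by
        funext w
        rw [Finset.sum_apply]
        rw [Finset.sum_eq_single w]
        · simp only [Pi.smul_apply, hψ, eq_self_iff_true, if_true, smul_eq_mul]
          linear_combination (φ w) * hs2 w.1
        · intro u _ hu
          simp only [Pi.smul_apply, hψ, smul_eq_mul]
          rw [if_neg (fun hc => hu hc.symm), mul_zero]
        · intro h; exact absurd (Finset.mem_univ _) h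
      have h2 : (∑ u : {v : G.V // v ∈ G.incVerts S}, (s u.1 * φ u) • ψ v₀) = 0 := by
        rw [← Finset.sum_smul, ← hεapply, hφ, zero_smul]
      have hrepr : φ = ∑ u : {v : G.V // v ∈ G.incVerts S},
          (s u.1 * φ u) • (ψ u - ψ v₀) := by
        rw [Finset.sum_congr rfl fun u _ => smul_sub (s u.1 * φ u) (ψ u) (ψ v₀),
          Finset.sum_sub_distrib, h1, h2, sub_zero]
      rw [hrepr]
      exact Submodule.sum_mem _ fun u _ => Submodule.smul_mem _ _ (hψ_diff u v₀)
  -- ε is surjective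
  have hsurj : Function.Surjective ε := by
    intro z
    refine ⟨z • ψ v₀, ?_⟩
    rw [map_smul, hεψ, smul_eq_mul, mul_one]
  -- dimension counting
  have hcardE : Module.finrank ℂ ({e : G.E // e ∈ S} → ℂ) = S.ncard := by
    rw [Module.finrank_fintype_fun_eq_card, ← Nat.card_eq_fintype_card,
      Nat.card_coe_set_eq]
  have hcardV : Module.finrank ℂ ({v : G.V // v ∈ G.incVerts S} → ℂ) =
      (G.incVerts S).ncard := by
    rw [Module.finrank_fintype_fun_eq_card, ← Nat.card_eq_fintype_card,
      Nat.card_coe_set_eq]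
  have hrr := LinearMap.finrank_range_add_finrank_ker D
  have hrε := LinearMap.finrank_range_add_finrank_ker ε
  have hrangeε : LinearMap.range ε = ⊤ := LinearMap.range_eq_top.mpr hsurj
  have hfrε : Module.finrank ℂ (LinearMap.range ε) = 1 := by
    rw [hrangeε, finrank_top, Module.finrank_self]
  have hKrank : Module.finrank ℂ (kirchSub G S σ) =
      Module.finrank ℂ (LinearMap.ker D) := by
    rw [hKmap]
    exact (Submodule.equivMapOfInjective ext0 hext0_inj (LinearMap.ker D)).finrank_eq.symm
  rw [hcardE] at hrr
  rw [hcardV, hfrε] at hrε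
  rw [hrange] at hrr
  rw [hKrank]
  omega

end MetricGraph

namespace MetricGraph

variable {G : MetricGraph}

/-- The model-solution linear map. -/
def Tmap (G : MetricGraph) (om : ℝ) : (G.E → ℂ) →ₗ[ℂ] (G.E → ℝ → ℂ) where
  toFun b := fun e x => b e * Complex.sin (om * x)
  map_add' a b := by funext e x; simp [add_mul]
  map_smul' c a := by funext e x; simp [mul_assoc]

lemma Tmap_inj (om : ℝ) (hom : 0 < om) : Function.Injective (Tmap G om) := by
  intro a b hab
  funext e
  have h := congrFun (congrFun hab e) (π / (2 * om))
  simp only [Tmap, LinearMap.coe_mk, AddHom.coe_mk] at h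
  have harg : ((om : ℂ) * ((π / (2 * om) : ℝ) : ℂ)) = ((π / 2 : ℝ) : ℂ) := by
    have hom' : (om : ℂ) ≠ 0 := by exact_mod_cast hom.ne'
    push_cast
    field_simp
  rw [harg] at h
  have hsin : Complex.sin ((π / 2 : ℝ) : ℂ) = 1 := by
    rw [← Complex.ofReal_sin, Real.sin_pi_div_two, Complex.ofReal_one]
  rw [hsin, mul_one, mul_one] at h
  exact h

end MetricGraph

namespace MetricGraph

variable {G : MetricGraph}

lemma resSet_eq (lam : ℝ) (hlam : 0 < lam) :
    G.resSet lam = ↑(Submodule.map (Tmap G (Real.sqrt lam))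
      (kirchSub G (G.lamEdges lam)
        (fun e => ((Real.cos (Real.sqrt lam * G.L e) : ℝ) : ℂ)))) := by
  classical
  set om := Real.sqrt lam with hom_def
  have hom : 0 < om := Real.sqrt_pos.mpr hlam
  have hom' : (om : ℂ) ≠ 0 := by exact_mod_cast hom.ne'
  have hom2 : ((om : ℂ)) ^ 2 = (lam : ℂ) := by
    rw [← Complex.ofReal_pow]
    norm_cast
    exact Real.sq_sqrt hlam.le
  set S := G.lamEdges lam with hS
  set σ : G.E → ℂ := fun e => ((Real.cos (om * G.L e) : ℝ) : ℂ) with hσ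
  have hsinS : ∀ e ∈ S, Complex.sin ((om : ℂ) * (G.L e : ℂ)) = 0 := by
    intro e he
    obtain ⟨k, hk0, hkL⟩ := he
    rw [← Complex.ofReal_mul, ← Complex.ofReal_sin, Complex.ofReal_eq_zero]
    rw [hkL]
    have : om * ((k : ℝ) * (π / om)) = (k : ℝ) * π := by
      field_simp
    rw [this]
    exact Real.sin_nat_mul_pi k
  have hsinNS : ∀ e ∉ S, Complex.sin ((om : ℂ) * (G.L e : ℂ)) ≠ 0 := by
    intro e he hzero
    rw [← Complex.ofReal_mul, ← Complex.ofReal_sin, Complex.ofReal_eq_zero] at hzero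
    obtain ⟨n, hn⟩ := Real.sin_eq_zero_iff.mp hzero
    have hpos : 0 < om * G.L e := mul_pos hom (G.L_pos e)
    have hnpos : 0 < n := by
      by_contra hc
      push_neg at hc
      have : (n : ℝ) * π ≤ 0 :=
        mul_nonpos_of_nonpos_of_nonneg (by exact_mod_cast hc) Real.pi_pos.le
      linarith [hn ▸ this]
    apply he
    refine ⟨n.toNat, by omega, ?_⟩
    have hcast : ((n.toNat : ℕ) : ℝ) = (n : ℝ) := by
      exact_mod_cast Int.toNat_of_nonneg hnpos.le
    show G.L e = ((n.toNat : ℕ) : ℝ) * (π / om)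
    rw [hcast]
    field_simp
    linarith [hn]
  have hcosS : ∀ e, Complex.cos ((om : ℂ) * (G.L e : ℂ)) = σ e := by
    intro e
    rw [← Complex.ofReal_mul, ← Complex.ofReal_cos]
  ext f
  simp only [SetLike.mem_coe, Submodule.mem_map]
  constructor
  · rintro ⟨⟨⟨hsm, hode, hcont⟩, hkir⟩, hvan⟩
    set b : G.E → ℂ := fun e => deriv (f e) 0 / om with hb
    have hfe : ∀ e, f e = fun x : ℝ => b e * Complex.sin (om * x) := by
      intro e
      funext y
      refine sol_form om hom (f e) (hsm e) ?_ (hvan e).1 y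
      intro z
      rw [hode e z, hom2]
    have hder : ∀ e (y : ℝ), deriv (f e) y = b e * om * Complex.cos (om * y) := by
      intro e y
      rw [hfe e]
      exact (hasDerivAt_csin (b e) om y).deriv
    refine ⟨b, ⟨?_, ?_⟩, ?_⟩
    · intro e he
      have h2 := (hvan e).2
      rw [hfe e] at h2
      simp only at h2
      rcases mul_eq_zero.mp h2 with h | h
      · exact h
      · exact absurd h (hsinNS e he)
    · intro v
      have hk := hkir v
      unfold normDer at hk
      rw [Finset.sum_congr rfl (fun e _ => hder e (G.L e)),
        Finset.sum_congr rfl (fun e _ => hder e 0)] at hk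
      have hrw1 : ∀ e, b e * om * Complex.cos ((om : ℂ) * (G.L e : ℂ)) =
          (b e * σ e) * om := by
        intro e
        rw [hcosS e]
        ring
      rw [Finset.sum_congr rfl (fun e _ => hrw1 e)] at hk
      have hrw2 : ∀ e : G.E, b e * (om : ℂ) * Complex.cos ((om : ℂ) * ((0 : ℝ) : ℂ)) =
          b e * om := by
        intro e
        norm_num
      rw [Finset.sum_congr rfl (fun e _ => hrw2 e)] at hk
      rw [← Finset.sum_mul, ← Finset.sum_mul, ← sub_mul] at hk
      rcases mul_eq_zero.mp hk with h | h
      · exact sub_eq_zero.mp h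
      · exact absurd h hom'
    · funext e
      exact (hfe e).symm
  · rintro ⟨b, ⟨hb1, hb2⟩, rfl⟩
    have hf0 : ∀ e, Tmap G om b e 0 = 0 := by
      intro e
      show b e * Complex.sin ((om : ℂ) * ((0 : ℝ) : ℂ)) = 0
      norm_num
    have hfL : ∀ e, Tmap G om b e (G.L e) = 0 := by
      intro e
      show b e * Complex.sin ((om : ℂ) * ((G.L e : ℝ) : ℂ)) = 0
      by_cases he : e ∈ S
      · rw [hsinS e he, mul_zero]
      · rw [hb1 e he, zero_mul]
    have hder : ∀ e (y : ℝ), deriv (Tmap G om b e) y = b e * om * Complex.cos (om * y) := by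
      intro e y
      exact (hasDerivAt_csin (b e) om y).deriv
    refine ⟨⟨⟨?_, ?_, ?_, ?_, ?_⟩, ?_⟩, fun e => ⟨hf0 e, hfL e⟩⟩
    · intro e
      exact contDiff_csin (b e) om
    · intro e y
      have hd1 : deriv (Tmap G om b e) = fun z : ℝ => b e * om * Complex.cos (om * z) :=
        funext fun z => hder e z
      rw [hd1, (hasDerivAt_ccos (b e * om) om y).deriv]
      show -(b e * om * om * Complex.sin (om * y)) = -(lam : ℂ) * (b e * Complex.sin (om * y))
      rw [← hom2]
      ring
    · intro e₁ e₂ _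
      rw [hf0, hf0]
    · intro e₁ e₂ _
      rw [hf0, hfL]
    · intro e₁ e₂ _
      rw [hfL, hfL]
    · intro v
      unfold normDer
      rw [Finset.sum_congr rfl (fun e _ => hder e (G.L e)),
        Finset.sum_congr rfl (fun e _ => hder e 0)]
      have hrw1 : ∀ e, b e * om * Complex.cos ((om : ℂ) * (G.L e : ℂ)) =
          (b e * σ e) * om := by
        intro e
        rw [hcosS e]
        ring
      rw [Finset.sum_congr rfl (fun e _ => hrw1 e)]
      have hrw2 : ∀ e : G.E, b e * (om : ℂ) * Complex.cos ((om : ℂ) * ((0 : ℝ) : ℂ)) =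
          b e * om := by
        intro e
        norm_num
      rw [Finset.sum_congr rfl (fun e _ => hrw2 e)]
      rw [← Finset.sum_mul, ← Finset.sum_mul, ← sub_mul, hb2 v, sub_self, zero_mul]

end MetricGraph

namespace MetricGraph

variable {G : MetricGraph}

lemma bodd_iff_odd (m : ℕ) : Nat.bodd m = true ↔ Odd m := by
  rw [Nat.odd_iff, Nat.mod_two_of_bodd]
  cases h : m.bodd <;> simp

end MetricGraph

/-- if `G_λ` is connected and contains no cycle of odd length with
respect to `π/√λ`, then `dim R(G, λ) = β₁(G_λ)`. -/
theorem statement_1 (G : MetricGraph) (lam : ℝ) (hlam : 0 < lam)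
    (hconn : ∀ v ∈ G.incVerts (G.lamEdges lam), ∀ w ∈ G.incVerts (G.lamEdges lam),
      G.connRel (G.lamEdges lam) v w)
    (hnoodd : ¬ ∃ c : G.Cycle, c.inSub (G.lamEdges lam) ∧ c.oddLength (π / Real.sqrt lam)) :
    (G.dimRes lam : ℤ) = G.beta1 (G.lamEdges lam) := by
  classical
  open MetricGraph in
  set om := Real.sqrt lam with hom_def
  have hom : 0 < om := Real.sqrt_pos.mpr hlam
  set S := G.lamEdges lam with hSdef
  set σ : G.E → ℂ := fun e => ((Real.cos (om * G.L e) : ℝ) : ℂ) with hσ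
  have hdim : G.dimRes lam = Module.finrank ℂ (MetricGraph.kirchSub G S σ) := by
    unfold MetricGraph.dimRes
    rw [MetricGraph.resSet_eq lam hlam, Submodule.span_eq]
    exact ((Submodule.equivMapOfInjective _ (MetricGraph.Tmap_inj om hom) _).finrank_eq).symm
  by_cases hne : S.Nonempty
  · -- main case
    obtain ⟨e₀, he₀⟩ := hne
    set kf : G.E → ℕ := fun e => if h : e ∈ S then h.choose else 0 with hkf
    have hk0 : ∀ e (he : e ∈ S), 0 < kf e := by
      intro e he
      rw [hkf]
      simp only [dif_pos he]
      exact he.choose_spec.1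
    have hkL : ∀ e ∈ S, G.L e = kf e * (π / om) := by
      intro e he
      conv_lhs => rw [(he.choose_spec.2 : G.L e = he.choose * (π / Real.sqrt lam))]
      rw [hkf]
      simp only [dif_pos he]
      rw [hom_def]
    have hnowalk : ∀ (l : List (MetricGraph.Stp G)) (v : G.V), MetricGraph.IsWalk S v l v →
        MetricGraph.wpar (fun e => Nat.bodd (kf e)) l = false := by
      intro l v hw
      by_contra hc
      have htrue : MetricGraph.wpar (fun e => Nat.bodd (kf e)) l = true := by
        cases h : MetricGraph.wpar (fun e => Nat.bodd (kf e)) l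
        · exact absurd h hc
        · rfl
      obtain ⟨c, hc1, hc2⟩ := MetricGraph.exists_cycle_of_odd_walk S (π / om) kf hkL
        l.length l v le_rfl hw htrue
      exact hnoodd ⟨c, hc1, hc2⟩
    have hv₀mem : G.o e₀ ∈ G.incVerts S := ⟨e₀, he₀, Or.inl rfl⟩
    obtain ⟨τ, hτ⟩ := MetricGraph.exists_switch S (fun e => Nat.bodd (kf e)) hnowalk (G.o e₀)
      (fun v hv => hconn _ hv₀mem v hv)
    set s : G.V → ℂ := fun v => if τ v then -1 else 1 with hs
    have hs2 : ∀ v, s v * s v = 1 := by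
      intro v
      rw [hs]
      by_cases h : τ v <;> simp [h]
    have hsσ : ∀ e ∈ S, σ e = s (G.o e) * s (G.t e) := by
      intro e he
      have hcos : Real.cos (om * G.L e) = (if Nat.bodd (kf e) then (-1 : ℝ) else 1) := by
        rw [hkL e he]
        have harg : om * ((kf e : ℝ) * (π / om)) = (kf e : ℝ) * π := by
          field_simp
        rw [harg]
        have h1 : Real.cos ((kf e : ℝ) * π - 0) = (-1 : ℝ) ^ (kf e) * Real.cos 0 :=
          Real.cos_nat_mul_pi_sub 0 (kf e)
        rw [sub_zero, Real.cos_zero, mul_one] at h1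
        rw [h1]
        by_cases hb : Nat.bodd (kf e)
        · rw [if_pos hb, Odd.neg_one_pow ((MetricGraph.bodd_iff_odd _).mp hb)]
        · rw [if_neg hb, Even.neg_one_pow]
          rw [← Nat.not_odd_iff_even]
          intro hodd
          exact hb ((MetricGraph.bodd_iff_odd _).mpr hodd)
      have hττ := hτ e he
      show ((Real.cos (om * G.L e) : ℝ) : ℂ) = s (G.o e) * s (G.t e)
      rw [hcos, hs]
      by_cases h1 : τ (G.o e) <;> by_cases h2 : Nat.bodd (kf e) <;>
        simp only [h1, h2, Bool.xor_false, Bool.xor_true, Bool.true_xor, Bool.false_xor,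
          Bool.not_true, Bool.not_false, eq_self_iff_true] at hττ <;>
        simp [h1, h2, hττ] <;> norm_num
    have hfr := MetricGraph.finrank_kirch S σ s hs2 hsσ hconn ⟨e₀, he₀⟩
    have hbeta0 : G.beta0 S = 1 := by
      unfold MetricGraph.beta0
      have himg : G.component S '' G.incVerts S = {G.component S (G.o e₀)} := by
        ext C
        constructor
        · rintro ⟨v, hv, rfl⟩
          show G.component S v = G.component S (G.o e₀)
          ext w
          show G.connRel S v w ↔ G.connRel S (G.o e₀) w
          constructor
          · intro h
            exact Relation.EqvGen.trans _ _ _ (hconn _ hv₀mem v hv) h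
          · intro h
            exact Relation.EqvGen.trans _ _ _ (hconn v hv _ hv₀mem) h
        · intro hC
          rw [Set.mem_singleton_iff] at hC
          exact ⟨G.o e₀, hv₀mem, hC.symm⟩
      rw [himg, Set.ncard_singleton]
    unfold MetricGraph.beta1
    rw [hdim, hbeta0, hfr]
    push_cast
    ring
  · -- empty case
    rw [Set.not_nonempty_iff_eq_empty] at hne
    have hK : MetricGraph.kirchSub G S σ = ⊥ := by
      rw [Submodule.eq_bot_iff]
      rintro b ⟨hb1, _⟩
      funext e
      exact hb1 e (by rw [hne]; exact Set.notMem_empty e)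
    have hinc : G.incVerts S = ∅ := by
      ext v
      simp only [MetricGraph.incVerts, Set.mem_setOf_eq, Set.mem_empty_iff_false, iff_false]
      rintro ⟨e, he, _⟩
      rw [hne] at he
      exact Set.notMem_empty e he
    have hbeta0 : G.beta0 S = 0 := by
      unfold MetricGraph.beta0
      rw [hinc]
      simp
    unfold MetricGraph.beta1
    rw [hdim, hK, hbeta0, hinc, hne]
    simp
end
end

section
/- Let G be a finite metric graph and let λ > 0. Assume that the subgraph G_λ is connected and contains at least one cycle whose length is an odd integer multiple of π/√λ. Then dim R(G, λ) = β₁(G_λ) − 1. -/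
open Real Set Filter Topology

noncomputable section

/-! ### Auxiliary development -/

section AuxODE

open Real

lemma hasDerivAt_sinC (s x : ℝ) :
    HasDerivAt (fun y : ℝ => ((Real.sin (s * y) : ℝ) : ℂ)) ((s * Real.cos (s * x) : ℝ) : ℂ) x := by
  have h1 : HasDerivAt (fun y : ℝ => s * y) s x := by
    simpa using (hasDerivAt_id x).const_mul s
  have h2 := (Real.hasDerivAt_sin (s * x)).comp x h1
  have := h2.ofReal_comp
  simpa [mul_comm] using this

lemma hasDerivAt_cosC (s x : ℝ) :
    HasDerivAt (fun y : ℝ => ((Real.cos (s * y) : ℝ) : ℂ)) ((-(s * Real.sin (s * x)) : ℝ) : ℂ) x := by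
  have h1 : HasDerivAt (fun y : ℝ => s * y) s x := by
    simpa using (hasDerivAt_id x).const_mul s
  have h2 := (Real.hasDerivAt_cos (s * x)).comp x h1
  have := h2.ofReal_comp
  simpa [mul_comm] using this

lemma sol_formula (s : ℝ) (hs : 0 < s) (f : ℝ → ℂ) (hf : ContDiff ℝ 2 f)
    (hode : ∀ x, deriv (deriv f) x = -(s^2 : ℂ) * f x) (h0 : f 0 = 0) :
    ∀ x, f x = (deriv f 0 / s) * ((Real.sin (s * x) : ℝ) : ℂ) := by
  have d1 : Differentiable ℝ f := hf.differentiable (by norm_num)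
  have d2 : Differentiable ℝ (deriv f) := by
    have : ContDiff ℝ 1 (deriv f) := by
      have h := (contDiff_succ_iff_deriv (n := 1)).mp (by exact_mod_cast hf)
      exact h.2.2
    exact this.differentiable (by norm_num)
  set W1 : ℝ → ℂ := fun x => deriv f x * ((Real.sin (s * x) : ℝ) : ℂ)
      - f x * ((s * Real.cos (s * x) : ℝ) : ℂ) with hW1def
  set W2 : ℝ → ℂ := fun x => deriv f x * ((Real.cos (s * x) : ℝ) : ℂ)
      + f x * ((s * Real.sin (s * x) : ℝ) : ℂ) with hW2def
  have hW1 : ∀ x, HasDerivAt W1 0 x := by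
    intro x
    have hfx := (d1 x).hasDerivAt
    have hdfx := (d2 x).hasDerivAt
    have h1 := hdfx.mul (hasDerivAt_sinC s x)
    have h2' : HasDerivAt (fun y => ((s * Real.cos (s * y) : ℝ) : ℂ))
        ((-(s * (s * Real.sin (s * x))) : ℝ) : ℂ) x := by
      have := (hasDerivAt_cosC s x).const_mul ((s : ℝ) : ℂ)
      exact (this.congr_deriv (by push_cast; ring)).congr_of_eventuallyEq
        (Filter.Eventually.of_forall fun y => by simp)
    have h2 := hfx.mul h2'
    have := h1.sub h2
    refine this.congr_deriv ?_
    rw [hode x]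
    push_cast
    ring
  have hW2 : ∀ x, HasDerivAt W2 0 x := by
    intro x
    have hfx := (d1 x).hasDerivAt
    have hdfx := (d2 x).hasDerivAt
    have h1 := hdfx.mul (hasDerivAt_cosC s x)
    have h2' : HasDerivAt (fun y => ((s * Real.sin (s * y) : ℝ) : ℂ))
        ((s * (s * Real.cos (s * x)) : ℝ) : ℂ) x := by
      have := (hasDerivAt_sinC s x).const_mul ((s : ℝ) : ℂ)
      exact (this.congr_deriv (by push_cast; ring)).congr_of_eventuallyEq
        (Filter.Eventually.of_forall fun y => by simp)
    have h2 := hfx.mul h2'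
    have := h1.add h2
    refine this.congr_deriv ?_
    rw [hode x]
    push_cast
    ring
  have hW1c : ∀ x, W1 x = 0 := by
    intro x
    have := is_const_of_deriv_eq_zero (f := W1) (fun y => (hW1 y).differentiableAt)
      (fun y => (hW1 y).deriv) x 0
    simpa [hW1def, h0] using this
  have hW2c : ∀ x, W2 x = deriv f 0 := by
    intro x
    have := is_const_of_deriv_eq_zero (f := W2) (fun y => (hW2 y).differentiableAt)
      (fun y => (hW2 y).deriv) x 0
    simpa [hW2def, h0] using this
  intro x
  have e1 := hW1c x
  have e2 := hW2c x
  have hpy : ((Real.sin (s * x) : ℝ) : ℂ)^2 + ((Real.cos (s * x) : ℝ) : ℂ)^2 = 1 := by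
    exact_mod_cast Real.sin_sq_add_cos_sq (s * x)
  have hsne : (s : ℂ) ≠ 0 := by exact_mod_cast hs.ne'
  have key : (s : ℂ) * f x = deriv f 0 * ((Real.sin (s * x) : ℝ) : ℂ) := by
    simp only [hW1def, hW2def] at e1 e2
    rw [Complex.ofReal_mul] at e1 e2
    linear_combination ((Real.sin (s*x) : ℝ) : ℂ) * e2 - ((Real.cos (s*x) : ℝ) : ℂ) * e1
      - ((s : ℂ) * f x) * hpy
  rw [div_mul_eq_mul_div, eq_div_iff hsne]
  linear_combination key

lemma model_hasDerivAt (s : ℝ) (a : ℂ) (x : ℝ) :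
    HasDerivAt (fun y : ℝ => a * ((Real.sin (s * y) : ℝ) : ℂ)) (a * ((s * Real.cos (s * x) : ℝ) : ℂ)) x :=
  (hasDerivAt_sinC s x).const_mul a

lemma model_deriv (s : ℝ) (a : ℂ) (x : ℝ) :
    deriv (fun y : ℝ => a * ((Real.sin (s * y) : ℝ) : ℂ)) x = a * ((s * Real.cos (s * x) : ℝ) : ℂ) :=
  (model_hasDerivAt s a x).deriv

lemma model_deriv2 (s : ℝ) (a : ℂ) (x : ℝ) :
    deriv (deriv (fun y : ℝ => a * ((Real.sin (s * y) : ℝ) : ℂ))) x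
      = -(s:ℂ)^2 * (a * ((Real.sin (s * x) : ℝ) : ℂ)) := by
  have hfun : deriv (fun y : ℝ => a * ((Real.sin (s * y) : ℝ) : ℂ))
      = fun y : ℝ => (a * s) * ((Real.cos (s * y) : ℝ) : ℂ) := by
    funext y
    rw [model_deriv]
    push_cast
    ring
  rw [hfun]
  have := ((hasDerivAt_cosC s x).const_mul (a * (s:ℂ))).deriv
  rw [this]
  push_cast
  ring

lemma model_contDiff (s : ℝ) (a : ℂ) :
    ContDiff ℝ 2 (fun y : ℝ => a * ((Real.sin (s * y) : ℝ) : ℂ)) := by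
  apply ContDiff.mul contDiff_const
  apply Complex.ofRealCLM.contDiff.comp
  exact (Real.contDiff_sin.of_le le_top).comp (contDiff_const.mul contDiff_id)

end AuxODE

section AuxGraph

open Real
open scoped Classical

namespace MetricGraph

variable (G : MetricGraph) (lam : ℝ)

/-- The cosine sign of an edge. -/
noncomputable def edgeSign (e : G.E) : ℝ := Real.cos (Real.sqrt lam * G.L e)

lemma mem_lamEdges_iff (hlam : 0 < lam) (e : G.E) :
    e ∈ G.lamEdges lam ↔ Real.sin (Real.sqrt lam * G.L e) = 0 := by
  have hs : 0 < Real.sqrt lam := Real.sqrt_pos.mpr hlam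
  constructor
  · rintro ⟨k, hk, hL⟩
    have : Real.sqrt lam * G.L e = k * π := by
      rw [hL]; field_simp
    rw [this]
    exact Real.sin_nat_mul_pi k
  · intro h
    rcases Real.sin_eq_zero_iff.mp h with ⟨n, hn⟩
    have hpos : 0 < (n : ℝ) * π := by
      rw [hn]; exact mul_pos (Real.sqrt_pos.mpr hlam) (G.L_pos e)
    have hn0 : 0 < n := by
      by_contra hcon
      push_neg at hcon
      have : (n : ℝ) * π ≤ 0 := mul_nonpos_of_nonpos_of_nonneg (by exact_mod_cast hcon) Real.pi_pos.le
      linarith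
    refine ⟨n.toNat, by omega, ?_⟩
    have hnn : ((n.toNat : ℕ) : ℝ) = (n : ℝ) := by exact_mod_cast Int.toNat_of_nonneg hn0.le
    rw [hnn]
    field_simp
    linarith [hn]

lemma edgeSign_sq (hlam : 0 < lam) {e : G.E} (he : e ∈ G.lamEdges lam) :
    (G.edgeSign lam e)^2 = 1 := by
  have h := (G.mem_lamEdges_iff lam hlam e).mp he
  have := Real.sin_sq_add_cos_sq (Real.sqrt lam * G.L e)
  rw [h] at this
  simpa [edgeSign] using this

/-- The vertex set of `G_lam` as a subtype. -/
abbrev lamV := {v // v ∈ G.incVerts (G.lamEdges lam)}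

/-- The edge set of `G_lam` as a subtype. -/
abbrev lamE := {e // e ∈ G.lamEdges lam}

lemma o_mem_incVerts {e : G.E} (he : e ∈ G.lamEdges lam) :
    G.o e ∈ G.incVerts (G.lamEdges lam) := ⟨e, he, Or.inl rfl⟩

lemma t_mem_incVerts {e : G.E} (he : e ∈ G.lamEdges lam) :
    G.t e ∈ G.incVerts (G.lamEdges lam) := ⟨e, he, Or.inr rfl⟩

/-- The signed incidence matrix of `G_lam`. -/
noncomputable def lamMatrix : Matrix (G.lamV lam) (G.lamE lam) ℂ :=
  Matrix.of fun v e =>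
    (if G.t e.1 = v.1 then ((G.edgeSign lam e.1 : ℝ) : ℂ) else 0) -
      (if G.o e.1 = v.1 then 1 else 0)

/-- Extension of a coefficient vector on `G_lam` to an eigenfunction. -/
noncomputable def psiExt : ((G.lamE lam) → ℂ) →ₗ[ℂ] (G.E → ℝ → ℂ) where
  toFun a := fun e x => (if h : e ∈ G.lamEdges lam then a ⟨e, h⟩ else 0) *
    ((Real.sin (Real.sqrt lam * x) : ℝ) : ℂ)
  map_add' a b := by
    funext e x
    by_cases h : e ∈ G.lamEdges lam <;> simp [h] <;> ring
  map_smul' c a := by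
    funext e x
    by_cases h : e ∈ G.lamEdges lam <;> simp [h, smul_eq_mul] <;> ring

lemma psiExt_injective (hlam : 0 < lam) : Function.Injective (G.psiExt lam) := by
  have hs : 0 < Real.sqrt lam := Real.sqrt_pos.mpr hlam
  intro a b hab
  funext e
  have := congrFun (congrFun hab e.1) (π / (2 * Real.sqrt lam))
  have harg : Real.sqrt lam * (π / (2 * Real.sqrt lam)) = π / 2 := by
    field_simp
  simp only [psiExt, LinearMap.coe_mk, AddHom.coe_mk, harg, Real.sin_pi_div_two,
    Complex.ofReal_one, mul_one, dif_pos e.2] at this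
  simpa using this

lemma sum_subtype_ext (S : Set G.E) (g : G.E → ℂ) (hg : ∀ e ∉ S, g e = 0) :
    ∑ e : {e // e ∈ S}, g e.1 = ∑ e : G.E, g e := by
  rw [← Finset.sum_subtype (Finset.univ.filter (· ∈ S)) (by simp) g]
  exact Finset.sum_filter_of_ne (fun e _ hne => by_contra fun hmem => hne (hg e hmem))

lemma psiExt_apply (a : (G.lamE lam) → ℂ) (e : G.E) :
    (G.psiExt lam a) e = fun x : ℝ =>
      (if h : e ∈ G.lamEdges lam then a ⟨e, h⟩ else 0) *
        ((Real.sin (Real.sqrt lam * x) : ℝ) : ℂ) := rfl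

/-- The coefficient of `psiExt a` on edge `e`. -/
noncomputable def aaExt (a : (G.lamE lam) → ℂ) (e : G.E) : ℂ :=
  if h : e ∈ G.lamEdges lam then a ⟨e, h⟩ else 0

lemma aaExt_zero (a : (G.lamE lam) → ℂ) {e : G.E} (he : e ∉ G.lamEdges lam) :
    G.aaExt lam a e = 0 := dif_neg he

lemma psiExt_deriv (a : (G.lamE lam) → ℂ) (e : G.E) (x : ℝ) :
    deriv ((G.psiExt lam a) e) x
      = G.aaExt lam a e * ((Real.sqrt lam * Real.cos (Real.sqrt lam * x) : ℝ) : ℂ) := by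
  rw [psiExt_apply]
  exact model_deriv (Real.sqrt lam) (G.aaExt lam a e) x

lemma normDer_psiExt (a : (G.lamE lam) → ℂ) (v : G.V) :
    G.normDer (G.psiExt lam a) v
      = ((Real.sqrt lam : ℝ) : ℂ) * ∑ e : G.E, G.aaExt lam a e *
          ((if G.t e = v then ((G.edgeSign lam e : ℝ) : ℂ) else 0) -
            (if G.o e = v then 1 else 0)) := by
  unfold normDer
  have h1 : ∀ e : G.E, deriv ((G.psiExt lam a) e) (G.L e)
      = ((Real.sqrt lam : ℝ) : ℂ) * (G.aaExt lam a e * ((G.edgeSign lam e : ℝ) : ℂ)) := by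
    intro e
    rw [psiExt_deriv]
    unfold edgeSign
    push_cast
    ring
  have h2 : ∀ e : G.E, deriv ((G.psiExt lam a) e) 0
      = ((Real.sqrt lam : ℝ) : ℂ) * G.aaExt lam a e := by
    intro e
    rw [psiExt_deriv]
    simp [mul_comm]
  simp only [h1, h2]
  rw [Finset.sum_filter, Finset.sum_filter, ← Finset.sum_sub_distrib, Finset.mul_sum]
  apply Finset.sum_congr rfl
  intro e _
  by_cases ht : G.t e = v <;> by_cases ho : G.o e = v <;> simp [ht, ho] <;> ring

lemma mulVec_lamMatrix (a : (G.lamE lam) → ℂ) (v : G.lamV lam) :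
    (G.lamMatrix lam).mulVec a v
      = ∑ e : G.E, G.aaExt lam a e *
          ((if G.t e = v.1 then ((G.edgeSign lam e : ℝ) : ℂ) else 0) -
            (if G.o e = v.1 then 1 else 0)) := by
  rw [← G.sum_subtype_ext (G.lamEdges lam) _ (fun e he => by rw [G.aaExt_zero lam a he, zero_mul])]
  unfold Matrix.mulVec dotProduct lamMatrix
  apply Finset.sum_congr rfl
  intro e _
  have : G.aaExt lam a e.1 = a e := by unfold aaExt; rw [dif_pos e.2]
  rw [this]
  simp only [Matrix.of_apply]
  ring

lemma normDer_psiExt_mem (a : (G.lamE lam) → ℂ) (v : G.V)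
    (hv : v ∈ G.incVerts (G.lamEdges lam)) :
    G.normDer (G.psiExt lam a) v
      = ((Real.sqrt lam : ℝ) : ℂ) * (G.lamMatrix lam).mulVec a ⟨v, hv⟩ := by
  rw [normDer_psiExt, mulVec_lamMatrix]

lemma normDer_psiExt_notmem (a : (G.lamE lam) → ℂ) (v : G.V)
    (hv : v ∉ G.incVerts (G.lamEdges lam)) :
    G.normDer (G.psiExt lam a) v = 0 := by
  rw [normDer_psiExt]
  rw [Finset.sum_eq_zero, mul_zero]
  intro e _
  by_cases he : e ∈ G.lamEdges lam
  · have ht : G.t e ≠ v := fun h => hv (h ▸ G.t_mem_incVerts lam he)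
    have ho : G.o e ≠ v := fun h => hv (h ▸ G.o_mem_incVerts lam he)
    simp [ht, ho]
  · rw [G.aaExt_zero lam a he, zero_mul]

lemma sqrt_sq_C (hlam : 0 < lam) : ((Real.sqrt lam : ℝ) : ℂ)^2 = (lam : ℂ) := by
  have : (Real.sqrt lam)^2 = lam := Real.sq_sqrt hlam.le
  exact_mod_cast congrArg (Complex.ofReal) this

lemma resSet_eq_s2 (hlam : 0 < lam) :
    G.resSet lam = (G.psiExt lam) '' (LinearMap.ker (G.lamMatrix lam).mulVecLin : Set _) := by
  have hs : 0 < Real.sqrt lam := Real.sqrt_pos.mpr hlam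
  have hsC : ((Real.sqrt lam : ℝ) : ℂ) ≠ 0 := by exact_mod_cast hs.ne'
  ext f
  constructor
  · rintro ⟨⟨⟨hcd, hode, hcont⟩, hnorm⟩, hvan⟩
    have hformula : ∀ e, ∀ x, f e x
        = (deriv (f e) 0 / Real.sqrt lam) * ((Real.sin (Real.sqrt lam * x) : ℝ) : ℂ) := by
      intro e
      apply sol_formula (Real.sqrt lam) hs (f e) (hcd e) _ (hvan e).1
      intro x
      rw [hode e x, sqrt_sq_C lam hlam]
    set a' : (G.lamE lam) → ℂ := fun e => deriv (f e.1) 0 / Real.sqrt lam with ha'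
    have hzero : ∀ e ∉ G.lamEdges lam, deriv (f e) 0 / (Real.sqrt lam : ℂ) = 0 := by
      intro e he
      have h1 := (hvan e).2
      rw [hformula e (G.L e)] at h1
      rcases mul_eq_zero.mp h1 with h | h
      · exact_mod_cast h
      · exfalso
        apply he
        rw [G.mem_lamEdges_iff lam hlam]
        exact_mod_cast h
    have hf_eq : f = G.psiExt lam a' := by
      funext e x
      rw [psiExt_apply, hformula e x]
      by_cases he : e ∈ G.lamEdges lam
      · rw [dif_pos he]
      · rw [dif_neg he]
        rw [show (deriv (f e) 0 / (Real.sqrt lam : ℂ)) = 0 from by exact_mod_cast hzero e he]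
    refine ⟨a', ?_, hf_eq.symm⟩
    simp only [SetLike.mem_coe, LinearMap.mem_ker, Matrix.mulVecLin_apply]
    funext v
    have h1 := G.normDer_psiExt_mem lam a' v.1 v.2
    rw [← hf_eq, hnorm v.1] at h1
    have := (mul_eq_zero.mp h1.symm).resolve_left hsC
    simpa using this
  · rintro ⟨a', ha', rfl⟩
    simp only [SetLike.mem_coe, LinearMap.mem_ker, Matrix.mulVecLin_apply] at ha'
    have hvan : ∀ e, (G.psiExt lam a') e 0 = 0 ∧ (G.psiExt lam a') e (G.L e) = 0 := by
      intro e
      constructor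
      · simp [psiExt_apply]
      · simp only [psiExt_apply]
        by_cases he : e ∈ G.lamEdges lam
        · rw [(G.mem_lamEdges_iff lam hlam e).mp he]
          simp
        · rw [dif_neg he, zero_mul]
    refine ⟨⟨⟨?_, ?_, ?_, ?_, ?_⟩, ?_⟩, hvan⟩
    · intro e
      rw [psiExt_apply]
      exact model_contDiff _ _
    · intro e x
      rw [psiExt_apply]
      rw [show (fun x : ℝ => (if h : e ∈ G.lamEdges lam then a' ⟨e, h⟩ else 0) *
        ((Real.sin (Real.sqrt lam * x) : ℝ) : ℂ)) = (G.psiExt lam a') e from rfl]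
      rw [show deriv (deriv ((G.psiExt lam a') e)) x
          = -((Real.sqrt lam : ℝ) : ℂ)^2 * ((G.psiExt lam a') e x) from
        model_deriv2 (Real.sqrt lam) (G.aaExt lam a' e) x]
      rw [sqrt_sq_C lam hlam]
    · intro e₁ e₂ _
      rw [(hvan e₁).1, (hvan e₂).1]
    · intro e₁ e₂ _
      rw [(hvan e₁).1, (hvan e₂).2]
    · intro e₁ e₂ _
      rw [(hvan e₁).2, (hvan e₂).2]
    · intro v
      by_cases hv : v ∈ G.incVerts (G.lamEdges lam)
      · rw [G.normDer_psiExt_mem lam a' v hv, ha']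
        simp
      · exact G.normDer_psiExt_notmem lam a' v hv

lemma cos_nat_mul_pi' (n : ℕ) : Real.cos (n * π) = (-1 : ℝ)^n := by
  simpa using Real.cos_nat_mul_pi_sub 0 n

lemma ker_transpose_eq_bot (hlam : 0 < lam)
    (hconn : ∀ v ∈ G.incVerts (G.lamEdges lam), ∀ w ∈ G.incVerts (G.lamEdges lam),
      G.connRel (G.lamEdges lam) v w)
    (hodd : ∃ c : G.Cycle, c.inSub (G.lamEdges lam) ∧ c.oddLength (π / Real.sqrt lam)) :
    LinearMap.ker ((G.lamMatrix lam).transpose).mulVecLin = ⊥ := by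
  have hs : 0 < Real.sqrt lam := Real.sqrt_pos.mpr hlam
  rw [LinearMap.ker_eq_bot']
  intro b hb
  rw [Matrix.mulVecLin_apply] at hb
  have hsum : ∀ (w : G.V) (hw : w ∈ G.incVerts (G.lamEdges lam)) (c : ℂ),
      (∑ v : G.lamV lam, (if w = v.1 then c else 0) * b v) = c * b ⟨w, hw⟩ := by
    intro w hw c
    rw [Finset.sum_eq_single (⟨w, hw⟩ : G.lamV lam)]
    · simp
    · intro v _ hne
      rw [if_neg, zero_mul]
      intro h
      exact hne (Subtype.ext h.symm)
    · intro h
      exact absurd (Finset.mem_univ _) h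
  have hrel : ∀ e : G.lamE lam,
      b ⟨G.o e.1, G.o_mem_incVerts lam e.2⟩
        = ((G.edgeSign lam e.1 : ℝ) : ℂ) * b ⟨G.t e.1, G.t_mem_incVerts lam e.2⟩ := by
    intro e
    have h := congrFun hb e
    unfold Matrix.mulVec dotProduct at h
    simp only [Matrix.transpose_apply, lamMatrix, Matrix.of_apply, Pi.zero_apply, sub_mul,
      one_mul] at h
    rw [Finset.sum_sub_distrib, hsum _ (G.t_mem_incVerts lam e.2),
      hsum _ (G.o_mem_incVerts lam e.2)] at h
    linear_combination -h
  -- the odd cycle forces a zero value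
  set bv : G.V → ℂ := fun v => if h : v ∈ G.incVerts (G.lamEdges lam) then b ⟨v, h⟩ else 0
    with hbv
  have hstep : ∀ e ∈ G.lamEdges lam, bv (G.o e) = ((G.edgeSign lam e : ℝ) : ℂ) * bv (G.t e) := by
    intro e he
    rw [hbv]
    simp only [dif_pos (G.o_mem_incVerts lam he), dif_pos (G.t_mem_incVerts lam he)]
    exact hrel ⟨e, he⟩
  have hsignsq : ∀ e ∈ G.lamEdges lam, ((G.edgeSign lam e : ℝ) : ℂ)^2 = 1 := by
    intro e he
    exact_mod_cast G.edgeSign_sq lam hlam he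
  have hsignne : ∀ e ∈ G.lamEdges lam, ((G.edgeSign lam e : ℝ) : ℂ) ≠ 0 := by
    intro e he h0
    have := hsignsq e he
    rw [h0] at this
    simp at this
  obtain ⟨c, hsub, m, hmodd, hmlen⟩ := hodd
  set vs : Fin c.n → G.V := fun i => G.esrc (c.edge i) (c.dir i) with hvsdef
  have hvs : ∀ i, vs i ∈ G.incVerts (G.lamEdges lam) := by
    intro i
    rw [hvsdef]
    simp only [esrc]
    split
    · exact G.o_mem_incVerts lam (hsub i)
    · exact G.t_mem_incVerts lam (hsub i)
  have hstep2 : ∀ i, bv (vs i)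
      = ((G.edgeSign lam (c.edge i) : ℝ) : ℂ) * bv (G.edst (c.edge i) (c.dir i)) := by
    intro i
    rw [hvsdef]
    simp only []
    cases hd : c.dir i
    · simp only [esrc, edst, hd, if_neg Bool.false_ne_true]
      rw [hstep _ (hsub i), ← mul_assoc, ← sq, hsignsq _ (hsub i), one_mul]
    · simp only [esrc, edst, hd, if_pos rfl]
      exact hstep _ (hsub i)
  set sig : ℕ → ℂ :=
    fun j => ((G.edgeSign lam (c.edge ⟨j % c.n, Nat.mod_lt _ c.npos⟩) : ℝ) : ℂ) with hsig
  set vN : ℕ → G.V := fun j => vs ⟨j % c.n, Nat.mod_lt _ c.npos⟩ with hvN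
  have hidx : ∀ j : ℕ, ((j % c.n) + 1) % c.n = (j + 1) % c.n := by
    intro j
    conv_rhs => rw [Nat.add_mod]
    by_cases h1 : c.n = 1
    · simp [h1]
    · rw [Nat.mod_eq_of_lt (show 1 < c.n by have := c.npos; omega)]
  have hkey : ∀ j : ℕ, j ≤ c.n →
      bv c.start = (∏ i ∈ Finset.range j, sig i) * bv (vN j) := by
    intro j
    induction j with
    | zero =>
      intro _
      have h0 : (⟨0 % c.n, Nat.mod_lt _ c.npos⟩ : Fin c.n) = ⟨0, c.npos⟩ :=
        Fin.ext (Nat.zero_mod _)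
      rw [hvN]
      simp only [h0]
      rw [Finset.prod_range_zero, one_mul]
      rfl
    | succ j ih =>
      intro hj1
      rw [ih (Nat.le_of_succ_le hj1), Finset.prod_range_succ]
      have hc := c.chain ⟨j % c.n, Nat.mod_lt _ c.npos⟩
      have h2 := hstep2 ⟨j % c.n, Nat.mod_lt _ c.npos⟩
      rw [hc] at h2
      have hfin : (⟨((j % c.n : ℕ) + 1) % c.n, Nat.mod_lt _ c.npos⟩ : Fin c.n)
          = ⟨(j + 1) % c.n, Nat.mod_lt _ c.npos⟩ := Fin.ext (hidx j)
      rw [hfin] at h2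
      have h2' : bv (vN j) = sig j * bv (vN (j + 1)) := h2
      rw [h2']
      ring
  have hstart : c.start = vs ⟨0, c.npos⟩ := rfl
  have hN : vN c.n = c.start := by
    have hfin : (⟨c.n % c.n, Nat.mod_lt _ c.npos⟩ : Fin c.n) = ⟨0, c.npos⟩ := by
      apply Fin.ext
      simp
    show vs ⟨c.n % c.n, Nat.mod_lt _ c.npos⟩ = c.start
    rw [hfin, hstart]
  -- compute the product
  have hsub' : ∀ i : Fin c.n, ∃ k : ℕ, 0 < k ∧ G.L (c.edge i) = k * (π / Real.sqrt lam) :=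
    fun i => hsub i
  choose k hk0 hkL using hsub'
  have hsigval : ∀ i : Fin c.n, G.edgeSign lam (c.edge i) = (-1 : ℝ)^(k i) := by
    intro i
    unfold edgeSign
    rw [hkL i]
    have harg : Real.sqrt lam * ((k i : ℝ) * (π / Real.sqrt lam)) = (k i : ℝ) * π := by
      field_simp
    rw [harg]
    exact cos_nat_mul_pi' (k i)
  have hsumk : ∑ i : Fin c.n, k i = m := by
    have hlen : (∑ i : Fin c.n, (k i : ℝ)) * (π / Real.sqrt lam) = m * (π / Real.sqrt lam) := by
      rw [← hmlen, Finset.sum_mul]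
      unfold Cycle.length
      exact Finset.sum_congr rfl fun i _ => (hkL i).symm
    have hps : π / Real.sqrt lam ≠ 0 := (div_pos Real.pi_pos hs).ne'
    have hc := mul_right_cancel₀ hps hlen
    exact_mod_cast hc
  have hprod : (∏ i ∈ Finset.range c.n, sig i) = -1 := by
    have h1 : (∏ i ∈ Finset.range c.n, sig i)
        = ∏ i : Fin c.n, ((G.edgeSign lam (c.edge i) : ℝ) : ℂ) := by
      rw [← Fin.prod_univ_eq_prod_range sig c.n]
      apply Finset.prod_congr rfl
      intro i _
      have hfin : (⟨(i : ℕ) % c.n, Nat.mod_lt _ c.npos⟩ : Fin c.n) = i := by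
        apply Fin.ext
        simp [Nat.mod_eq_of_lt i.isLt]
      show ((G.edgeSign lam (c.edge ⟨(i : ℕ) % c.n, Nat.mod_lt _ c.npos⟩) : ℝ) : ℂ)
        = ((G.edgeSign lam (c.edge i) : ℝ) : ℂ)
      rw [hfin]
    rw [h1]
    have h2 : ∀ i : Fin c.n, ((G.edgeSign lam (c.edge i) : ℝ) : ℂ) = (-1 : ℂ)^(k i) := by
      intro i
      rw [hsigval i]
      push_cast
      ring
    simp only [h2]
    rw [Finset.prod_pow_eq_pow_sum, hsumk]
    exact Odd.neg_one_pow hmodd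
  have hb0 : bv c.start = 0 := by
    have h := hkey c.n le_rfl
    rw [hN, hprod] at h
    have h2 : (2 : ℂ) * bv c.start = 0 := by linear_combination h
    simpa using h2
  -- propagate by connectivity
  have hiff : ∀ v w, G.connRel (G.lamEdges lam) v w → (bv v = 0 ↔ bv w = 0) := by
    intro v w h
    induction h with
    | rel x y hxy =>
      obtain ⟨e, heS, ho, ht⟩ := hxy
      subst ho
      subst ht
      rw [hstep e heS]
      constructor
      · intro h0
        exact (mul_eq_zero.mp h0).resolve_left (hsignne e heS)
      · intro h0
        rw [h0, mul_zero]
    | refl x => exact Iff.rfl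
    | symm x y _ ih => exact ih.symm
    | trans x y z _ _ ih1 ih2 => exact ih1.trans ih2
  have hstartmem : c.start ∈ G.incVerts (G.lamEdges lam) := by
    rw [hstart]
    exact hvs _
  funext w
  have hw := (hiff c.start w.1 (hconn _ hstartmem _ w.2)).mp hb0
  rw [hbv] at hw
  simp only [dif_pos w.2] at hw
  simpa using hw

lemma beta0_eq_one (hlam : 0 < lam)
    (hconn : ∀ v ∈ G.incVerts (G.lamEdges lam), ∀ w ∈ G.incVerts (G.lamEdges lam),
      G.connRel (G.lamEdges lam) v w)
    (hne : (G.incVerts (G.lamEdges lam)).Nonempty) :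
    G.beta0 (G.lamEdges lam) = 1 := by
  obtain ⟨v0, hv0⟩ := hne
  have hcomp : ∀ w ∈ G.incVerts (G.lamEdges lam),
      G.component (G.lamEdges lam) w = G.component (G.lamEdges lam) v0 := by
    intro w hw
    ext u
    constructor
    · intro hu
      exact Relation.EqvGen.trans _ _ _ (hconn v0 hv0 w hw) hu
    · intro hu
      exact Relation.EqvGen.trans _ _ _ (hconn w hw v0 hv0) hu
  have himg : G.component (G.lamEdges lam) '' G.incVerts (G.lamEdges lam)
      = {G.component (G.lamEdges lam) v0} := by
    apply Set.eq_singleton_iff_nonempty_unique_mem.mpr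
    constructor
    · exact ⟨_, ⟨v0, hv0, rfl⟩⟩
    · rintro Cs ⟨w, hw, rfl⟩
      exact hcomp w hw
  unfold beta0
  rw [himg, Set.ncard_singleton]

end MetricGraph

end AuxGraph

/-- if `G_λ` is connected and contains a cycle of odd length with
respect to `π/√λ`, then `dim R(G, λ) = β₁(G_λ) - 1`. -/
theorem statement_2 (G : MetricGraph) (lam : ℝ) (hlam : 0 < lam)
    (hconn : ∀ v ∈ G.incVerts (G.lamEdges lam), ∀ w ∈ G.incVerts (G.lamEdges lam),
      G.connRel (G.lamEdges lam) v w)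
    (hodd : ∃ c : G.Cycle, c.inSub (G.lamEdges lam) ∧ c.oddLength (π / Real.sqrt lam)) :
    (G.dimRes lam : ℤ) = G.beta1 (G.lamEdges lam) - 1 := by
  classical
  obtain ⟨c, hsubc, hoddc⟩ := hodd
  have hne : (G.incVerts (G.lamEdges lam)).Nonempty :=
    ⟨G.o (c.edge ⟨0, c.npos⟩), G.o_mem_incVerts lam (hsubc ⟨0, c.npos⟩)⟩
  have hker := G.ker_transpose_eq_bot lam hlam hconn ⟨c, hsubc, hoddc⟩
  -- dimension of the resonance space equals the kernel dimension
  have hdim : G.dimRes lam = Module.finrank ℂ (LinearMap.ker (G.lamMatrix lam).mulVecLin) := by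
    unfold MetricGraph.dimRes
    rw [G.resSet_eq_s2 lam hlam,
      show Submodule.span ℂ
          ((G.psiExt lam) '' (LinearMap.ker (G.lamMatrix lam).mulVecLin : Set _))
        = Submodule.map (G.psiExt lam) (LinearMap.ker (G.lamMatrix lam).mulVecLin) from by
        rw [← Submodule.map_span, Submodule.span_eq]]
    exact (LinearEquiv.finrank_eq
      (Submodule.equivMapOfInjective _ (G.psiExt_injective lam hlam) _)).symm
  -- rank of the incidence matrix
  have hinj : Function.Injective ((G.lamMatrix lam).transpose).mulVecLin :=
    LinearMap.ker_eq_bot.mp hker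
  have htget : ((G.lamMatrix lam).transpose).rank = Fintype.card (G.lamV lam) := by
    unfold Matrix.rank
    rw [LinearMap.finrank_range_of_inj hinj]
    exact Module.finrank_pi ℂ
  have hrank : Module.finrank ℂ (LinearMap.range (G.lamMatrix lam).mulVecLin)
      = Fintype.card (G.lamV lam) := by
    have h2 := Matrix.rank_transpose (G.lamMatrix lam)
    rw [htget] at h2
    unfold Matrix.rank at h2
    exact h2.symm
  have hrn := LinearMap.finrank_range_add_finrank_ker ((G.lamMatrix lam).mulVecLin)
  rw [hrank, Module.finrank_pi ℂ] at hrn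
  -- counting
  have hc1 : Fintype.card (G.lamV lam) = (G.incVerts (G.lamEdges lam)).ncard := by
    rw [← Nat.card_coe_set_eq, Nat.card_eq_fintype_card]
  have hc2 : Fintype.card (G.lamE lam) = (G.lamEdges lam).ncard := by
    rw [← Nat.card_coe_set_eq, Nat.card_eq_fintype_card]
  have hb0 := G.beta0_eq_one lam hlam hconn hne
  unfold MetricGraph.beta1
  rw [hb0, hdim]
  rw [hc1, hc2] at hrn
  push_cast
  omega
end
end

section
/- Let G be a finite metric graph, let λ > 0, and suppose G contains a cycle C such that the length of every edge of C is a positive integer multiple of π/√λ and the total length of C is an even integer multiple of π/√λ. Then λ is a resonance of G; more precisely, there exist signs α_e ∈ {−1, +1} for the edges e of C such that the function f defined by f_e(x) = α_e sin(√λ x) for edges e of C and f_e = 0 for all other edges is a nonzero element of R(G, λ). -/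
open Real Set Filter Topology

noncomputable section

lemma aux_hasDerivAt (A : ℂ) (s x : ℝ) :
    HasDerivAt (fun y : ℝ => A * (Real.sin (s * y) : ℂ)) (A * (s * Real.cos (s * x) : ℝ)) x := by
  have h1 : HasDerivAt (fun y : ℝ => s * y) s x := by
    simpa using (hasDerivAt_id x).const_mul s
  have h2 : HasDerivAt (fun y : ℝ => Real.sin (s * y)) (Real.cos (s * x) * s) x :=
    (Real.hasDerivAt_sin (s * x)).comp x h1
  have h3 := h2.ofReal_comp.const_mul A
  simpa [mul_comm] using h3

lemma aux_contDiff (A : ℂ) (s : ℝ) :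
    ContDiff ℝ 2 (fun y : ℝ => A * (Real.sin (s * y) : ℂ)) := by
  exact contDiff_const.mul (Complex.ofRealCLM.contDiff.comp
    (Real.contDiff_sin.comp (contDiff_const.mul contDiff_id)))

lemma aux_deriv (A : ℂ) (s : ℝ) :
    deriv (fun y : ℝ => A * (Real.sin (s * y) : ℂ)) =
      fun x => A * (s * Real.cos (s * x) : ℝ) := by
  funext x; exact (aux_hasDerivAt A s x).deriv

lemma aux_deriv2 (A : ℂ) (s x : ℝ) :
    deriv (deriv (fun y : ℝ => A * (Real.sin (s * y) : ℂ))) x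
      = -((s:ℂ)^2) * (A * (Real.sin (s * x) : ℝ)) := by
  rw [aux_deriv]
  have h1 : HasDerivAt (fun y : ℝ => s * y) s x := by
    simpa using (hasDerivAt_id x).const_mul s
  have h2 : HasDerivAt (fun y : ℝ => Real.cos (s * y)) (-Real.sin (s * x) * s) x :=
    (Real.hasDerivAt_cos (s * x)).comp x h1
  have h3 : HasDerivAt (fun y : ℝ => A * (s * Real.cos (s * y) : ℝ))
      (A * (s * (-Real.sin (s * x) * s) : ℝ)) x := by
    have := ((h2.const_mul s).ofReal_comp).const_mul A
    simpa using this
  rw [h3.deriv]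
  push_cast
  ring

/-- if `G` contains a cycle `C` all of whose edge lengths are positive
integer multiples of `π/√λ` and whose total length is an even integer multiple of
`π/√λ`, then `λ` is a resonance of `G`; more precisely there are signs `α_e ∈ {−1, +1}`
on the edges of `C` such that `f_e(x) = α_e sin(√λ x)` on the edges of `C`, extended by
`0`, is a nonzero element of `R(G, λ)`. -/
theorem statement_5 (G : MetricGraph) (lam : ℝ) (hlam : 0 < lam) (c : G.Cycle)
    (hedges : ∀ i, ∃ k : ℕ, 0 < k ∧ G.L (c.edge i) = k * (π / Real.sqrt lam))
    (htotal : ∃ m : ℕ, Even m ∧ c.length = m * (π / Real.sqrt lam)) :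
    G.IsResonance lam ∧
    ∃ α : G.E → ℤ, (∀ i, α (c.edge i) = 1 ∨ α (c.edge i) = -1) ∧
      (fun e x => if ∃ i, c.edge i = e then (α e : ℂ) * (Real.sin (Real.sqrt lam * x) : ℂ)
        else 0) ∈ G.resSet lam ∧
      (fun e x => if ∃ i, c.edge i = e then (α e : ℂ) * (Real.sin (Real.sqrt lam * x) : ℂ)
        else 0) ≠ (0 : G.E → ℝ → ℂ) := by
  haveI : NeZero c.n := ⟨c.npos.ne'⟩
  set s := Real.sqrt lam with hs_def
  have hs : 0 < s := Real.sqrt_pos.mpr hlam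
  have hs2 : s ^ 2 = lam := Real.sq_sqrt hlam.le
  have hp : 0 < π / s := div_pos Real.pi_pos hs
  choose k kpos hkL using hedges
  obtain ⟨m, hm_even, hm_len⟩ := htotal
  -- the sum of the k i equals m
  have hsum : ∑ i, k i = m := by
    have h1 : ((∑ i, k i : ℕ) : ℝ) * (π / s) = (m : ℝ) * (π / s) := by
      rw [← hm_len]
      unfold MetricGraph.Cycle.length
      push_cast
      rw [Finset.sum_mul]
      exact Finset.sum_congr rfl fun i _ => (hkL i).symm
    exact_mod_cast mul_right_cancel₀ hp.ne' h1
  -- sign bookkeeping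
  set ε : Fin c.n → ℤ := fun i => (-1) ^ (k i) with hε_def
  set k' : ℕ → ℕ := fun t => if h : t < c.n then k ⟨t, h⟩ else 0 with hk'_def
  set a : Fin c.n → ℤ := fun i => (-1) ^ (∑ t ∈ Finset.range i.val, k' t) with ha_def
  have hpm : ∀ N : ℕ, ((-1 : ℤ)) ^ N = 1 ∨ ((-1 : ℤ)) ^ N = -1 := by
    intro N
    rcases Nat.even_or_odd N with h | h
    · exact Or.inl h.neg_one_pow
    · exact Or.inr h.neg_one_pow
  have ha_pm : ∀ i, a i = 1 ∨ a i = -1 := fun i => hpm _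
  have hε_pm : ∀ i, ε i = 1 ∨ ε i = -1 := fun i => hpm _
  have hk'_eq : ∀ i : Fin c.n, k' i.val = k i := by
    intro i
    simp [hk'_def, i.isLt]
  -- the key recursion for a
  have ha_succ : ∀ i : Fin c.n,
      a ⟨(i.val + 1) % c.n, Nat.mod_lt _ c.npos⟩ = a i * ε i := by
    intro i
    rcases eq_or_lt_of_le (Nat.succ_le_of_lt i.isLt) with h | h
    · -- wrap-around case : i.val + 1 = c.n
      have h' : i.val + 1 = c.n := h
      have hmod : (i.val + 1) % c.n = 0 := by rw [h', Nat.mod_self]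
      have hall : ∑ t ∈ Finset.range c.n, k' t = m := by
        rw [← hsum, ← Fin.sum_univ_eq_sum_range k' c.n]
        exact Finset.sum_congr rfl fun j _ => hk'_eq j
      have hRHS : a i * ε i = (-1 : ℤ) ^ m := by
        simp only [ha_def, hε_def]
        rw [← hk'_eq i, ← pow_add, ← Finset.sum_range_succ, h', hall]
      have hA : a ⟨(i.val + 1) % c.n, Nat.mod_lt _ c.npos⟩ = 1 := by
        simp [ha_def, hmod]
      rw [hA, hRHS, hm_even.neg_one_pow]
    · have hmod : (i.val + 1) % c.n = i.val + 1 := Nat.mod_eq_of_lt h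
      have : a ⟨(i.val + 1) % c.n, Nat.mod_lt _ c.npos⟩ =
          (-1 : ℤ) ^ (∑ t ∈ Finset.range (i.val + 1), k' t) := by
        simp [ha_def, hmod]
      rw [this, Finset.sum_range_succ, pow_add, hk'_eq i, ha_def, hε_def]
  -- the signs α
  set α : G.E → ℤ := fun e =>
    if h : ∃ i, c.edge i = e then
      (if c.dir h.choose then -a h.choose else a h.choose * ε h.choose)
    else 1 with hα_def
  have hα : ∀ i, α (c.edge i) = if c.dir i then -a i else a i * ε i := by
    intro i
    have hex : ∃ j, c.edge j = c.edge i := ⟨i, rfl⟩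
    have hch : hex.choose = i := c.edge_inj hex.choose_spec
    rw [hα_def]
    simp only [dif_pos hex, hch]
  have hα_pm : ∀ i, α (c.edge i) = 1 ∨ α (c.edge i) = -1 := by
    intro i
    rw [hα i]
    rcases ha_pm i with h1 | h1 <;> rcases hε_pm i with h2 | h2 <;>
      cases c.dir i <;> simp [h1, h2]
  -- the function F
  set F : G.E → ℝ → ℂ := fun e x =>
    if ∃ i, c.edge i = e then (α e : ℂ) * (Real.sin (s * x) : ℂ) else 0 with hF_def
  have hF_cyc : ∀ e, (∃ i, c.edge i = e) →
      F e = fun y => ((α e : ℤ) : ℂ) * (Real.sin (s * y) : ℂ) := by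
    intro e he
    funext y
    rw [hF_def]
    simp only [if_pos he]
  have hF_nc : ∀ e, ¬(∃ i, c.edge i = e) → F e = fun _ => 0 := by
    intro e he
    funext y
    rw [hF_def]
    simp only [if_neg he]
  -- boundary values
  have hargL : ∀ i, s * G.L (c.edge i) = (k i) * π := by
    intro i
    rw [hkL i]
    field_simp
  have hsinL : ∀ i, Real.sin (s * G.L (c.edge i)) = 0 := by
    intro i
    rw [hargL i]
    exact Real.sin_nat_mul_pi (k i)
  have hcosL : ∀ i, Real.cos (s * G.L (c.edge i)) = (-1 : ℝ) ^ (k i) := by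
    intro i
    rw [hargL i]
    simpa using Real.cos_nat_mul_pi_sub 0 (k i)
  have hzero : ∀ e, F e 0 = 0 ∧ F e (G.L e) = 0 := by
    intro e
    by_cases he : ∃ i, c.edge i = e
    · obtain ⟨i, rfl⟩ := he
      constructor
      · rw [hF_cyc _ ⟨i, rfl⟩]
        simp
      · rw [hF_cyc _ ⟨i, rfl⟩]
        simp only [hsinL i]
        simp
    · rw [hF_nc e he]
      exact ⟨rfl, rfl⟩
  -- derivatives
  have hderiv : ∀ e x, deriv (F e) x =
      if ∃ i, c.edge i = e then ((α e : ℤ) : ℂ) * ((s * Real.cos (s * x) : ℝ) : ℂ) else 0 := by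
    intro e x
    by_cases he : ∃ i, c.edge i = e
    · rw [hF_cyc e he, aux_deriv, if_pos he]
    · rw [hF_nc e he, if_neg he]
      exact deriv_const x 0
  -- F is in the kernel
  have hcd : ∀ e, ContDiff ℝ 2 (F e) := by
    intro e
    by_cases he : ∃ i, c.edge i = e
    · rw [hF_cyc e he]; exact aux_contDiff _ s
    · rw [hF_nc e he]; exact contDiff_const
  have hd2 : ∀ e, ∀ x : ℝ, deriv (deriv (F e)) x = -(lam : ℂ) * F e x := by
    intro e x
    by_cases he : ∃ i, c.edge i = e
    · have hs2' : ((s : ℂ)) ^ 2 = (lam : ℂ) := by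
        rw [← hs2]; push_cast; ring
      have hFx : F e x = ((α e : ℤ) : ℂ) * (Real.sin (s * x) : ℂ) := by
        rw [hF_cyc e he]
      conv_lhs => rw [hF_cyc e he]
      rw [aux_deriv2, hs2', hFx]
    · rw [hF_nc e he]
      simp
  have hcv : G.ContVert F := by
    refine ⟨fun e₁ e₂ _ => ?_, fun e₁ e₂ _ => ?_, fun e₁ e₂ _ => ?_⟩
    · rw [(hzero e₁).1, (hzero e₂).1]
    · rw [(hzero e₁).1, (hzero e₂).2]
    · rw [(hzero e₁).2, (hzero e₂).2]
  -- Kirchhoff condition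
  have hkirch : ∀ v, G.normDer F v = 0 := by
    intro v
    -- complex versions of a, ε, α on cycle edges
    set aC : Fin c.n → ℂ := fun i => ((a i : ℤ) : ℂ) with haC_def
    set eC : Fin c.n → ℂ := fun i => ((ε i : ℤ) : ℂ) with heC_def
    have heC2 : ∀ i, eC i * eC i = 1 := by
      intro i
      rcases hε_pm i with h | h <;> simp [heC_def, h]
    -- endpoint derivative values
    have hDt : ∀ i, deriv (F (c.edge i)) (G.L (c.edge i)) =
        (s : ℂ) * (((α (c.edge i) : ℤ) : ℂ) * eC i) := by
      intro i
      rw [hderiv _ _, if_pos ⟨i, rfl⟩, hcosL i, heC_def, hε_def]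
      push_cast
      ring
    have hD0 : ∀ i, deriv (F (c.edge i)) 0 = (s : ℂ) * ((α (c.edge i) : ℤ) : ℂ) := by
      intro i
      rw [hderiv _ _, if_pos ⟨i, rfl⟩]
      simp only [mul_zero, Real.cos_zero, mul_one]
      ring
    have hDnc : ∀ e, ¬(∃ i, c.edge i = e) → ∀ x, deriv (F e) x = 0 := by
      intro e he x
      rw [hderiv e x, if_neg he]
    set g : G.E → ℂ := fun e =>
      (if G.t e = v then deriv (F e) (G.L e) else 0) -
        (if G.o e = v then deriv (F e) 0 else 0) with hg_def
    have hnd : G.normDer F v = ∑ e, g e := by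
      unfold MetricGraph.normDer
      rw [Finset.sum_filter, Finset.sum_filter, ← Finset.sum_sub_distrib]
    have hg_nc : ∀ e, ¬(∃ i, c.edge i = e) → g e = 0 := by
      intro e he
      rw [hg_def]
      simp [hDnc e he]
    have hsum_img : ∑ e, g e = ∑ i, g (c.edge i) := by
      rw [← Finset.sum_image (fun i _ j _ h => c.edge_inj h)]
      refine (Finset.sum_subset (Finset.subset_univ _) ?_).symm
      intro e _ he
      refine hg_nc e ?_
      intro ⟨i, hi⟩
      exact he (Finset.mem_image.mpr ⟨i, Finset.mem_univ i, hi⟩)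
    set b : Fin c.n → ℂ := fun i =>
      if G.esrc (c.edge i) (c.dir i) = v then aC i else 0 with hb_def
    have hgi : ∀ i, g (c.edge i) = (s : ℂ) *
        (b i - (if G.edst (c.edge i) (c.dir i) = v then aC i * eC i else 0)) := by
      intro i
      have hAi : ((α (c.edge i) : ℤ) : ℂ) = if c.dir i then -aC i else aC i * eC i := by
        rw [hα i, haC_def, heC_def]
        cases c.dir i <;> push_cast <;> simp
      rw [hg_def]
      simp only
      rw [hDt i, hD0 i, hAi, hb_def]
      rcases hε_pm i with hei | hei <;>
        cases hdi : c.dir i <;>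
        simp only [hdi, heC_def, hei, Int.cast_one, Int.cast_neg, MetricGraph.esrc,
          MetricGraph.edst, if_true, if_false, Bool.false_eq_true, ite_true, ite_false] <;>
        split_ifs <;>
        ring
    have hshift : ∀ i : Fin c.n,
        (if G.edst (c.edge i) (c.dir i) = v then aC i * eC i else 0) = b (i + 1) := by
      intro i
      have hidx : (i + 1 : Fin c.n) = ⟨(i.val + 1) % c.n, Nat.mod_lt _ c.npos⟩ := by
        apply Fin.ext
        rw [Fin.add_def, Fin.val_one']
        show ((i.val + 1 % c.n) % c.n) = (i.val + 1) % c.n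
        conv_rhs => rw [Nat.add_mod]
        rw [Nat.mod_eq_of_lt i.isLt]
      have h1 : aC i * eC i = aC ⟨(i.val + 1) % c.n, Nat.mod_lt _ c.npos⟩ := by
        simp only [haC_def]
        rw [← Int.cast_mul, ← ha_succ i]
      have hcond : G.edst (c.edge i) (c.dir i) = v ↔
          G.esrc (c.edge ⟨(i.val + 1) % c.n, Nat.mod_lt _ c.npos⟩)
            (c.dir ⟨(i.val + 1) % c.n, Nat.mod_lt _ c.npos⟩) = v := by rw [c.chain i]
      rw [hidx]
      simp only [hb_def]
      rw [h1]
      exact if_congr hcond rfl rfl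
    have hb_shift : ∑ i, b (i + 1) = ∑ i, b i :=
      Fintype.sum_equiv (Equiv.addRight (1 : Fin c.n)) _ _ (fun i => by
        simp [Equiv.coe_addRight])
    rw [hnd, hsum_img]
    have hsum2 : ∑ i, g (c.edge i) = (s : ℂ) * ∑ i, (b i - b (i + 1)) := by
      rw [Finset.mul_sum]
      exact Finset.sum_congr rfl fun i _ => by rw [hgi i, hshift i]
    rw [hsum2, Finset.sum_sub_distrib, hb_shift, sub_self, mul_zero]
  -- membership in the resonance eigenspace
  have hmem : F ∈ G.resSet lam := ⟨⟨⟨hcd, hd2, hcv⟩, hkirch⟩, hzero⟩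
  -- F is nonzero
  have hne : F ≠ (0 : G.E → ℝ → ℂ) := by
    intro h0
    set i0 : Fin c.n := ⟨0, c.npos⟩ with hi0
    have hval : F (c.edge i0) (π / (2 * s)) = ((α (c.edge i0) : ℤ) : ℂ) := by
      rw [hF_cyc _ ⟨i0, rfl⟩]
      have harg : s * (π / (2 * s)) = π / 2 := by
        field_simp
      simp only [harg, Real.sin_pi_div_two, Complex.ofReal_one, mul_one]
    have h0' : F (c.edge i0) (π / (2 * s)) = 0 := by rw [h0]; rfl
    rw [hval] at h0'
    rcases hα_pm i0 with h | h <;> rw [h] at h0' <;> norm_num at h0'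
  refine ⟨?_, α, hα_pm, ?_, ?_⟩
  · intro hres
    rw [hres] at hmem
    exact hne (by simpa using hmem)
  · refine Set.mem_of_eq_of_mem ?_ hmem
    funext e x
    rw [hF_def]
  · refine ne_of_eq_of_ne ?_ hne
    funext e x
    rw [hF_def]
end
end

section
/- Let G be a finite metric graph, let λ > 0, and let C be a cycle in G whose total length is an odd integer multiple of π/√λ. If f ∈ R(G, λ) vanishes identically on every edge of G not belonging to C, then f = 0. -/
open Real Set Filter Topology

noncomputable section

section AuxLemmas


private lemma aux_exp_deriv (c : ℂ) (x : ℝ) :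
    HasDerivAt (fun y : ℝ => Complex.exp (c * y)) (c * Complex.exp (c * x)) x := by
  have h1 : HasDerivAt (fun z : ℂ => Complex.exp (c * z)) (c * Complex.exp (c * x)) (x : ℂ) := by
    have := (Complex.hasDerivAt_exp (c * x)).comp (x : ℂ) ((hasDerivAt_id (x : ℂ)).const_mul c)
    exact this.congr_deriv (by simp only [id, mul_one]; ring)
  exact h1.comp_ofReal

private lemma aux_first_order (c : ℂ) (g : ℝ → ℂ) (hg : Differentiable ℝ g)
    (hd : ∀ x, deriv g x = c * g x) (x y : ℝ) :
    g x = g y * Complex.exp (c * (x - y)) := by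
  have hG : ∀ z : ℝ, HasDerivAt (fun w : ℝ => g w * Complex.exp (-c * w)) 0 z := by
    intro z
    have h1 := (hg z).hasDerivAt.mul (aux_exp_deriv (-c) z)
    exact h1.congr_deriv (by rw [hd z]; ring)
  have hconst := is_const_of_deriv_eq_zero (fun z => (hG z).differentiableAt)
    (fun z => (hG z).deriv) x y
  calc g x = g x * Complex.exp (-c * x) * Complex.exp (c * x) := by
        rw [mul_assoc, ← Complex.exp_add, show -c * (x:ℂ) + c * x = 0 by ring,
          Complex.exp_zero, mul_one]
    _ = g y * Complex.exp (-c * y) * Complex.exp (c * x) := by rw [hconst]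
    _ = g y * Complex.exp (c * ((x : ℝ) - y)) := by
        rw [mul_assoc, ← Complex.exp_add]
        congr 1
        ring_nf

private lemma aux_u_sol (ω : ℝ) (σ : ℂ) (hσ : σ * σ = 1) (g : ℝ → ℂ)
    (hg : ContDiff ℝ 2 g) (hode : ∀ x, deriv (deriv g) x = -(ω:ℂ)^2 * g x) (x y : ℝ) :
    deriv g x + σ * ω * Complex.I * g x
      = (deriv g y + σ * ω * Complex.I * g y) * Complex.exp (σ * ω * Complex.I * ((x:ℝ) - y)) := by
  have hg1 : Differentiable ℝ g := hg.differentiable (by norm_num)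
  have hg2 : Differentiable ℝ (deriv g) := by
    have h2 : ContDiff ℝ ((1 + 1 : ℕ) : WithTop ℕ∞) g := by exact_mod_cast hg
    have := h2.iterate_deriv' 1 1
    simpa using this.differentiable (by norm_num)
  set cc : ℂ := σ * ω * Complex.I with hcc
  have hccsq : cc * cc = -(ω:ℂ)^2 := by
    have : cc * cc = σ * σ * ((ω:ℂ)^2) * Complex.I ^ 2 := by rw [hcc]; ring
    rw [this, hσ, Complex.I_sq]; ring
  have hu : ∀ z, deriv (fun w => deriv g w + cc * g w) z = cc * (deriv g z + cc * g z) := by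
    intro z
    rw [deriv_fun_add (hg2 z) ((hg1 z).const_mul cc), deriv_const_mul cc (hg1 z), hode z,
      ← hccsq]
    ring
  exact aux_first_order cc (fun w => deriv g w + cc * g w)
    (fun z => hg2.add (hg1.const_mul cc) z) hu x y


private lemma aux_edge (ω L : ℝ) (g : ℝ → ℂ)
    (hg : ContDiff ℝ 2 g) (hode : ∀ x, deriv (deriv g) x = -(ω:ℂ)^2 * g x)
    (h0 : g 0 = 0) (hL : g L = 0) :
    (deriv g L = (Real.cos (ω * L) : ℂ) * deriv g 0) ∧
    (deriv g 0 = (Real.cos (ω * L) : ℂ) * deriv g L) ∧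
    (deriv g 0 * (Real.sin (ω * L) : ℂ) = 0) ∧
    (deriv g L * (Real.sin (ω * L) : ℂ) = 0) ∧
    (deriv g 0 = 0 → ∀ x, g x = 0) ∧
    (deriv g L = 0 → ∀ x, g x = 0) := by
  have hg1 : Differentiable ℝ g := hg.differentiable (by norm_num)
  have hp := aux_u_sol ω 1 (by ring) g hg hode
  have hm := aux_u_sol ω (-1) (by ring) g hg hode
  have hE1 : Complex.exp ((1:ℂ) * ω * Complex.I * ((L:ℝ) - (0:ℝ)))
      = (Real.cos (ω * L) : ℂ) + (Real.sin (ω * L) : ℂ) * Complex.I := by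
    rw [show (1:ℂ) * ω * Complex.I * ((L:ℝ) - (0:ℝ)) = ((ω * L : ℝ) : ℂ) * Complex.I by
      push_cast; ring, Complex.exp_mul_I, ← Complex.ofReal_cos, ← Complex.ofReal_sin]
  have hE2 : Complex.exp ((-1:ℂ) * ω * Complex.I * ((L:ℝ) - (0:ℝ)))
      = (Real.cos (ω * L) : ℂ) - (Real.sin (ω * L) : ℂ) * Complex.I := by
    rw [show (-1:ℂ) * ω * Complex.I * ((L:ℝ) - (0:ℝ)) = ((-(ω * L) : ℝ) : ℂ) * Complex.I by
      push_cast; ring, Complex.exp_mul_I, ← Complex.ofReal_cos, ← Complex.ofReal_sin,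
      Real.cos_neg, Real.sin_neg]
    push_cast; ring
  have hE3 : Complex.exp ((1:ℂ) * ω * Complex.I * ((0:ℝ) - (L:ℝ)))
      = (Real.cos (ω * L) : ℂ) - (Real.sin (ω * L) : ℂ) * Complex.I := by
    rw [show (1:ℂ) * ω * Complex.I * ((0:ℝ) - (L:ℝ)) = ((-(ω * L) : ℝ) : ℂ) * Complex.I by
      push_cast; ring, Complex.exp_mul_I, ← Complex.ofReal_cos, ← Complex.ofReal_sin,
      Real.cos_neg, Real.sin_neg]
    push_cast; ring
  have hE4 : Complex.exp ((-1:ℂ) * ω * Complex.I * ((0:ℝ) - (L:ℝ)))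
      = (Real.cos (ω * L) : ℂ) + (Real.sin (ω * L) : ℂ) * Complex.I := by
    rw [show (-1:ℂ) * ω * Complex.I * ((0:ℝ) - (L:ℝ)) = ((ω * L : ℝ) : ℂ) * Complex.I by
      push_cast; ring, Complex.exp_mul_I, ← Complex.ofReal_cos, ← Complex.ofReal_sin]
  have e1 : deriv g L = deriv g 0 * ((Real.cos (ω * L) : ℂ) + (Real.sin (ω * L) : ℂ) * Complex.I) := by
    have := hp L 0
    rw [h0, hL, hE1] at this
    simpa using this
  have e2 : deriv g L = deriv g 0 * ((Real.cos (ω * L) : ℂ) - (Real.sin (ω * L) : ℂ) * Complex.I) := by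
    have := hm L 0
    rw [h0, hL, hE2] at this
    simpa using this
  have e3 : deriv g 0 = deriv g L * ((Real.cos (ω * L) : ℂ) - (Real.sin (ω * L) : ℂ) * Complex.I) := by
    have := hp 0 L
    rw [h0, hL, hE3] at this
    simpa using this
  have e4 : deriv g 0 = deriv g L * ((Real.cos (ω * L) : ℂ) + (Real.sin (ω * L) : ℂ) * Complex.I) := by
    have := hm 0 L
    rw [h0, hL, hE4] at this
    simpa using this
  have hAsin : deriv g 0 * (Real.sin (ω * L) : ℂ) = 0 := by
    have h12 : deriv g 0 * ((Real.sin (ω * L) : ℂ)) * (2 * Complex.I) = 0 := by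
      linear_combination e2 - e1
    rcases mul_eq_zero.mp h12 with h | h
    · exact h
    · exact absurd h (by simp [Complex.I_ne_zero])
  have hBsin : deriv g L * (Real.sin (ω * L) : ℂ) = 0 := by
    have h12 : deriv g L * ((Real.sin (ω * L) : ℂ)) * (2 * Complex.I) = 0 := by
      linear_combination e3 - e4
    rcases mul_eq_zero.mp h12 with h | h
    · exact h
    · exact absurd h (by simp [Complex.I_ne_zero])
  have hBA : deriv g L = (Real.cos (ω * L) : ℂ) * deriv g 0 := by
    rw [e1]; linear_combination Complex.I * hAsin
  have hAB : deriv g 0 = (Real.cos (ω * L) : ℂ) * deriv g L := by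
    rw [e4]; linear_combination Complex.I * hBsin
  refine ⟨hBA, hAB, hAsin, hBsin, ?_, ?_⟩
  · intro hA x
    have hd : ∀ z, deriv g z = (-((ω:ℂ) * Complex.I)) * g z := by
      intro z
      have := hp z 0
      rw [h0, hA] at this
      simp at this
      linear_combination this
    have := aux_first_order (-((ω:ℂ) * Complex.I)) g hg1 hd x 0
    rw [h0] at this
    simpa using this
  · intro hB x
    have hd : ∀ z, deriv g z = (-((ω:ℂ) * Complex.I)) * g z := by
      intro z
      have := hp z L
      rw [hL, hB] at this
      simp at this
      linear_combination this
    have := aux_first_order (-((ω:ℂ) * Complex.I)) g hg1 hd x 0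
    rw [h0] at this
    simpa using this

private lemma aux_deriv_boundary (L : ℝ) (hL : 0 < L) (g : ℝ → ℂ)
    (hg : Differentiable ℝ g) (h : ∀ x ∈ Set.Icc (0:ℝ) L, g x = 0) :
    deriv g 0 = 0 ∧ deriv g L = 0 := by
  have hu := uniqueDiffOn_Icc hL
  have h0mem : (0:ℝ) ∈ Set.Icc (0:ℝ) L := ⟨le_rfl, hL.le⟩
  have hLmem : L ∈ Set.Icc (0:ℝ) L := ⟨hL.le, le_rfl⟩
  have heq : Set.EqOn g (fun _ => (0:ℂ)) (Set.Icc (0:ℝ) L) := fun x hx => h x hx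
  constructor
  · have h1 : derivWithin g (Set.Icc (0:ℝ) L) 0 = deriv g 0 :=
      (hg 0).derivWithin (hu 0 h0mem)
    rw [← h1, derivWithin_congr heq (h 0 h0mem)]
    exact congrFun (derivWithin_fun_const _ _) _
  · have h1 : derivWithin g (Set.Icc (0:ℝ) L) L = deriv g L :=
      (hg L).derivWithin (hu L hLmem)
    rw [← h1, derivWithin_congr heq (h L hLmem)]
    exact congrFun (derivWithin_fun_const _ _) _

private lemma aux_sin_cos_sum {α : Type} (s : Finset α) (a : α → ℝ)
    (h : ∀ j ∈ s, Real.sin (a j) = 0) :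
    Real.sin (∑ j ∈ s, a j) = 0 ∧ Real.cos (∑ j ∈ s, a j) = ∏ j ∈ s, Real.cos (a j) := by
  classical
  induction s using Finset.cons_induction with
  | empty => simp
  | cons x s hx ih =>
    have hhead : Real.sin (a x) = 0 := h x (Finset.mem_cons_self x s)
    have htail := ih (fun j hj => h j (Finset.mem_cons_of_mem hj))
    rw [Finset.sum_cons, Finset.prod_cons, Real.sin_add, Real.cos_add, hhead, htail.1, htail.2]
    constructor <;> ring

private lemma aux_mod_succ_cancel {n : ℕ} (hn : 0 < n) {a b : ℕ}
    (h : (a + 1) % n = (b + 1) % n) : a % n = b % n := by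
  have h2 := congrArg (fun x => (x + (n - 1)) % n) h
  simp only [Nat.mod_add_mod] at h2
  rw [show a + 1 + (n - 1) = a + n by omega, show b + 1 + (n - 1) = b + n by omega,
    Nat.add_mod_right, Nat.add_mod_right] at h2
  exact h2

private lemma aux_ite_split {β : Type} [DecidableEq β] (P : β → Bool) (a b : β)
    (D : β → ℂ) (j : β) :
    (if ((P j = true ∧ j = a) ∨ (P j = false ∧ j = b)) then D j else 0)
      = (if j = a then (if P a then D a else 0) else 0)
        + (if j = b then (if P b then 0 else D b) else 0) := by
  by_cases h1 : j = a <;> by_cases h2 : j = b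
  · subst h1
    subst h2
    rcases Bool.eq_false_or_eq_true (P j) with hd | hd <;> simp [hd]
  · subst h1
    rcases Bool.eq_false_or_eq_true (P j) with hd | hd <;> simp [hd, h2]
  · subst h2
    rcases Bool.eq_false_or_eq_true (P j) with hd | hd <;> simp [hd, h1]
  · simp [h1, h2]

end AuxLemmas

/-- if `C` is a cycle in `G` whose total length is an odd integer
multiple of `π/√λ` and `f ∈ R(G, λ)` vanishes identically on every edge of `G` not
belonging to `C`, then `f = 0`. -/
theorem statement_6 (G : MetricGraph) (lam : ℝ) (hlam : 0 < lam) (c : G.Cycle)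
    (hodd : c.oddLength (π / Real.sqrt lam))
    (f : G.E → ℝ → ℂ) (hf : f ∈ G.resSet lam)
    (hvanish : ∀ e, (¬ ∃ i, c.edge i = e) → ∀ x ∈ Set.Icc (0 : ℝ) (G.L e), f e x = 0) :
    ∀ e, ∀ x ∈ Set.Icc (0 : ℝ) (G.L e), f e x = 0 := by
  classical
  obtain ⟨⟨⟨hC2, hode, _hcont⟩, hkir⟩, hbdry⟩ := hf
  set ω := Real.sqrt lam with hωdef
  have hωpos : 0 < ω := Real.sqrt_pos.mpr hlam
  have hω2 : ((ω : ℂ)) ^ 2 = (lam : ℂ) := by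
    norm_cast
    exact Real.sq_sqrt hlam.le
  have hedge : ∀ e : G.E,
      (deriv (f e) (G.L e) = (Real.cos (ω * G.L e) : ℂ) * deriv (f e) 0) ∧
      (deriv (f e) 0 = (Real.cos (ω * G.L e) : ℂ) * deriv (f e) (G.L e)) ∧
      (deriv (f e) 0 * (Real.sin (ω * G.L e) : ℂ) = 0) ∧
      (deriv (f e) (G.L e) * (Real.sin (ω * G.L e) : ℂ) = 0) ∧
      (deriv (f e) 0 = 0 → ∀ x, f e x = 0) ∧
      (deriv (f e) (G.L e) = 0 → ∀ x, f e x = 0) := by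
    intro e
    exact aux_edge ω (G.L e) (f e) (hC2 e)
      (fun x => by rw [hω2]; exact hode e x) (hbdry e).1 (hbdry e).2
  have hnc : ∀ e, (¬ ∃ i, c.edge i = e) → deriv (f e) 0 = 0 ∧ deriv (f e) (G.L e) = 0 :=
    fun e he => aux_deriv_boundary (G.L e) (G.L_pos e) (f e)
      ((hC2 e).differentiable (by norm_num)) (hvanish e he)
  set n := c.n with hn
  have hnpos : 0 < n := c.npos
  set ι : ℕ → Fin n := fun k => ⟨k % n, Nat.mod_lt _ hnpos⟩ with hι
  set vtx : Fin n → G.V := fun i => G.esrc (c.edge i) (c.dir i) with hvtx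
  have hvinj : Function.Injective vtx := c.vert_inj
  have hchain : ∀ i : Fin n, G.edst (c.edge i) (c.dir i) = vtx (ι ((i : ℕ) + 1)) :=
    c.chain
  have hιval : ∀ i : Fin n, ι (i : ℕ) = i := fun i => Fin.ext (Nat.mod_eq_of_lt i.isLt)
  have hι_eq : ∀ (j : Fin n) (k : ℕ), ι ((j : ℕ) + 1) = ι (k + 1) ↔ j = ι k := by
    intro j k
    constructor
    · intro h
      have hval : ((j : ℕ) + 1) % n = (k + 1) % n := congrArg Fin.val h
      have h2 := aux_mod_succ_cancel hnpos hval
      rw [Nat.mod_eq_of_lt j.isLt] at h2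
      exact Fin.ext h2
    · intro h
      have hval : (j : ℕ) = k % n := congrArg Fin.val h
      apply Fin.ext
      show ((j : ℕ) + 1) % n = (k + 1) % n
      rw [hval, Nat.mod_add_mod]
  set S : Fin n → ℂ := fun i =>
    if c.dir i then deriv (f (c.edge i)) 0 else -deriv (f (c.edge i)) (G.L (c.edge i)) with hS
  set T : Fin n → ℂ := fun i =>
    if c.dir i then deriv (f (c.edge i)) (G.L (c.edge i)) else -deriv (f (c.edge i)) 0 with hT
  have hTS : ∀ i, T i = (Real.cos (ω * G.L (c.edge i)) : ℂ) * S i := by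
    intro i
    simp only [hS, hT]
    cases hd : c.dir i
    · rw [if_neg (by simp : ¬(false = true)), if_neg (by simp : ¬(false = true))]
      linear_combination -(hedge (c.edge i)).2.1
    · rw [if_pos rfl, if_pos rfl]
      exact (hedge (c.edge i)).1
  have hSsin : ∀ i, S i * (Real.sin (ω * G.L (c.edge i)) : ℂ) = 0 := by
    intro i
    simp only [hS]
    cases hd : c.dir i
    · rw [if_neg (by simp : ¬(false = true)), neg_mul, (hedge (c.edge i)).2.2.2.1, neg_zero]
    · rw [if_pos rfl]
      exact (hedge (c.edge i)).2.2.1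
  have hSzero : ∀ i, S i = 0 → ∀ x, f (c.edge i) x = 0 := by
    intro i hi x
    simp only [hS] at hi
    rcases Bool.eq_false_or_eq_true (c.dir i) with hd | hd
    · rw [if_pos hd] at hi
      exact (hedge (c.edge i)).2.2.2.2.1 hi x
    · rw [if_neg (by simp [hd])] at hi
      exact (hedge (c.edge i)).2.2.2.2.2 (neg_eq_zero.mp hi) x
  have hkey : ∀ k : ℕ, S (ι (k + 1)) = T (ι k) := by
    intro k
    have hchain' : ∀ j : Fin n, G.edst (c.edge j) (c.dir j) = vtx (ι ((j : ℕ) + 1)) := hchain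
    set v := vtx (ι (k + 1)) with hv
    have hTchar : ∀ j : Fin n, G.t (c.edge j) = v ↔
        ((c.dir j = true ∧ j = ι k) ∨ (c.dir j = false ∧ j = ι (k + 1))) := by
      intro j
      cases hd : c.dir j
      · have h1 : G.t (c.edge j) = vtx j := by
          simp only [hvtx, MetricGraph.esrc, hd]
          simp
        rw [h1, hv, hvinj.eq_iff]
        simp [hd]
      · have h1 : G.t (c.edge j) = G.edst (c.edge j) (c.dir j) := by
          simp [MetricGraph.edst, hd]
        rw [h1, hchain' j, hv, hvinj.eq_iff, hι_eq j k]
        simp [hd]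
    have hOchar : ∀ j : Fin n, G.o (c.edge j) = v ↔
        ((c.dir j = true ∧ j = ι (k + 1)) ∨ (c.dir j = false ∧ j = ι k)) := by
      intro j
      cases hd : c.dir j
      · have h1 : G.o (c.edge j) = G.edst (c.edge j) (c.dir j) := by
          simp [MetricGraph.edst, hd]
        rw [h1, hchain' j, hv, hvinj.eq_iff, hι_eq j k]
        simp [hd]
      · have h1 : G.o (c.edge j) = vtx j := by
          simp only [hvtx, MetricGraph.esrc, hd]
          simp
        rw [h1, hv, hvinj.eq_iff]
        simp [hd]
    have hkv := hkir v
    unfold MetricGraph.normDer at hkv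
    have hs1 : ∑ e ∈ Finset.univ.filter (fun e => G.t e = v), deriv (f e) (G.L e)
        = (if c.dir (ι k) then deriv (f (c.edge (ι k))) (G.L (c.edge (ι k))) else 0)
          + (if c.dir (ι (k + 1)) then 0
              else deriv (f (c.edge (ι (k + 1)))) (G.L (c.edge (ι (k + 1))))) := by
      rw [Finset.sum_filter]
      have hz : ∀ e ∈ (Finset.univ : Finset G.E), e ∉ Finset.univ.image c.edge →
          (if G.t e = v then deriv (f e) (G.L e) else 0) = 0 := by
        intro e _ he
        have hne : ¬ ∃ i, c.edge i = e := by
          simpa [Finset.mem_image] using he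
        rw [(hnc e hne).2]
        simp
      rw [← Finset.sum_subset (Finset.subset_univ _) hz,
        Finset.sum_image (fun a _ b _ h => c.edge_inj h)]
      have hpt : ∀ j : Fin n,
          (if G.t (c.edge j) = v then deriv (f (c.edge j)) (G.L (c.edge j)) else 0)
          = (if j = ι k then (if c.dir (ι k) then deriv (f (c.edge (ι k))) (G.L (c.edge (ι k))) else 0) else 0)
            + (if j = ι (k + 1) then (if c.dir (ι (k + 1)) then 0
                else deriv (f (c.edge (ι (k + 1)))) (G.L (c.edge (ι (k + 1))))) else 0) := by
        intro j
        rw [if_congr (hTchar j) rfl rfl]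
        exact aux_ite_split c.dir (ι k) (ι (k + 1))
          (fun i => deriv (f (c.edge i)) (G.L (c.edge i))) j
      rw [Finset.sum_congr rfl (fun j _ => hpt j), Finset.sum_add_distrib,
        Finset.sum_ite_eq' Finset.univ (ι k), Finset.sum_ite_eq' Finset.univ (ι (k + 1))]
      simp
    have hs2 : ∑ e ∈ Finset.univ.filter (fun e => G.o e = v), deriv (f e) 0
        = (if c.dir (ι (k + 1)) then deriv (f (c.edge (ι (k + 1)))) 0 else 0)
          + (if c.dir (ι k) then 0 else deriv (f (c.edge (ι k))) 0) := by
      rw [Finset.sum_filter]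
      have hz : ∀ e ∈ (Finset.univ : Finset G.E), e ∉ Finset.univ.image c.edge →
          (if G.o e = v then deriv (f e) 0 else 0) = 0 := by
        intro e _ he
        have hne : ¬ ∃ i, c.edge i = e := by
          simpa [Finset.mem_image] using he
        rw [(hnc e hne).1]
        simp
      rw [← Finset.sum_subset (Finset.subset_univ _) hz,
        Finset.sum_image (fun a _ b _ h => c.edge_inj h)]
      have hpt : ∀ j : Fin n,
          (if G.o (c.edge j) = v then deriv (f (c.edge j)) 0 else 0)
          = (if j = ι (k + 1) then (if c.dir (ι (k + 1)) then deriv (f (c.edge (ι (k + 1)))) 0 else 0) else 0)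
            + (if j = ι k then (if c.dir (ι k) then 0 else deriv (f (c.edge (ι k))) 0) else 0) := by
        intro j
        rw [if_congr (hOchar j) rfl rfl]
        exact aux_ite_split c.dir (ι (k + 1)) (ι k)
          (fun i => deriv (f (c.edge i)) 0) j
      rw [Finset.sum_congr rfl (fun j _ => hpt j), Finset.sum_add_distrib,
        Finset.sum_ite_eq' Finset.univ (ι (k + 1)), Finset.sum_ite_eq' Finset.univ (ι k)]
      simp
    rw [hs1, hs2] at hkv
    simp only [hS, hT]
    rcases Bool.eq_false_or_eq_true (c.dir (ι k)) with hd1 | hd1 <;>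
      rcases Bool.eq_false_or_eq_true (c.dir (ι (k + 1))) with hd2 | hd2 <;>
        simp [hd1, hd2] at hkv ⊢ <;>
          first
            | linear_combination hkv
            | linear_combination -hkv
  have hrec : ∀ k : ℕ, S (ι (k + 1)) = (Real.cos (ω * G.L (c.edge (ι k))) : ℂ) * S (ι k) := by
    intro k
    rw [hkey k, hTS (ι k)]
  have hiter : ∀ k : ℕ, S (ι k)
      = (∏ j ∈ Finset.range k, (Real.cos (ω * G.L (c.edge (ι j))) : ℂ)) * S (ι 0) := by
    intro k
    induction k with
    | zero => simp
    | succ k ih =>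
      rw [hrec k, ih, Finset.prod_range_succ]
      ring
  have hex : ∃ j : Fin n, S j = 0 := by
    by_contra hcon
    push_neg at hcon
    have hsin : ∀ j : Fin n, Real.sin (ω * G.L (c.edge j)) = 0 := by
      intro j
      rcases mul_eq_zero.mp (hSsin j) with h | h
      · exact absurd h (hcon j)
      · exact_mod_cast h
    have hsc := aux_sin_cos_sum Finset.univ (fun j : Fin n => ω * G.L (c.edge j))
      (fun j _ => hsin j)
    obtain ⟨m, hmodd, hmlen⟩ := hodd
    have hlen : ∑ j : Fin n, G.L (c.edge j) = m * (π / ω) := by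
      rw [← hmlen]
      rfl
    have hsum : ∑ j : Fin n, ω * G.L (c.edge j) = m * π := by
      rw [← Finset.mul_sum, hlen]
      field_simp
    have hcosval : Real.cos (∑ j : Fin n, ω * G.L (c.edge j)) = -1 := by
      rw [hsum]
      obtain ⟨l, hl⟩ := hmodd
      rw [show ((m : ℝ)) * π = l * (2 * π) + π by rw [hl]; push_cast; ring]
      exact Real.cos_nat_mul_two_pi_add_pi l
    have hprod : (∏ j : Fin n, Real.cos (ω * G.L (c.edge j))) = -1 := by
      rw [← hsc.2, hcosval]
    have hre : (∏ j ∈ Finset.range n, (Real.cos (ω * G.L (c.edge (ι j))) : ℂ)) = ((-1 : ℝ) : ℂ) := by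
      rw [← Complex.ofReal_prod]
      congr 1
      calc ∏ j ∈ Finset.range n, Real.cos (ω * G.L (c.edge (ι j)))
          = ∏ j : Fin n, Real.cos (ω * G.L (c.edge (ι (j : ℕ)))) :=
            (Fin.prod_univ_eq_prod_range (fun j => Real.cos (ω * G.L (c.edge (ι j)))) n).symm
        _ = ∏ j : Fin n, Real.cos (ω * G.L (c.edge j)) :=
            Finset.prod_congr rfl (fun j _ => by rw [hιval j])
        _ = -1 := hprod
    have hn0 := hiter n
    rw [show ι n = ι 0 from Fin.ext (by simp [hι]), hre] at hn0
    push_cast at hn0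
    exact hcon (ι 0) (by linear_combination hn0 / 2)
  obtain ⟨j0, hj0⟩ := hex
  have hzero : ∀ k : ℕ, S (ι ((j0 : ℕ) + k)) = 0 := by
    intro k
    induction k with
    | zero =>
      rw [Nat.add_zero, hιval j0]
      exact hj0
    | succ k ih =>
      rw [show (j0 : ℕ) + (k + 1) = ((j0 : ℕ) + k) + 1 from rfl, hrec, ih, mul_zero]
  have hall : ∀ i : Fin n, S i = 0 := by
    intro i
    have hj0lt := j0.isLt
    have h1 : (i : ℕ) + n = (j0 : ℕ) + ((i : ℕ) + n - (j0 : ℕ)) := by omega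
    have h2 := hzero ((i : ℕ) + n - (j0 : ℕ))
    rw [← h1] at h2
    rwa [show ι ((i : ℕ) + n) = i from
      Fin.ext (by simp [hι, Nat.add_mod_right, Nat.mod_eq_of_lt i.isLt])] at h2
  intro e x hx
  by_cases hcyc : ∃ i, c.edge i = e
  · obtain ⟨i, rfl⟩ := hcyc
    exact hSzero i (hall i) x
  · exact hvanish e hcyc x hx
end
end
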